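/- arXiv:2010.04720 — 10 statements merged into one kernel-verified Lean document; each statement's English description precedes it below -/
import Mathlib

section
/- Let n ≥ 1 and let f : ℝⁿ → ℝ satisfy f(x) ≥ −A₁|x|² − A₂ for all x ∈ ℝⁿ, for some constants A₁, A₂ ≥ 0, and let λ > A₁. Then for every x ∈ ℝⁿ the lower compensated convex transform equals the critical mixed Moreau envelope: C^l_λ(f)(x) = M^λ(M_λ(f))(x), i.e. co[f + λ|·|²](x) − λ|x|² = sup_{y∈ℝⁿ} inf_{u∈ℝⁿ} ( f(u) + λ|u−y|² − λ|y−x|² ). -/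
open scoped BigOperators

/-- Convex envelope: pointwise sup of affine minorants. -/
noncomputable def convEnv {n : ℕ} (g : EuclideanSpace ℝ (Fin n) → ℝ)
    (x : EuclideanSpace ℝ (Fin n)) : ℝ :=
  sSup {a : ℝ | ∃ ℓ : EuclideanSpace ℝ (Fin n) →ᵃ[ℝ] ℝ, (∀ y, ℓ y ≤ g y) ∧ a = ℓ x}

/-- Lower compensated convex transform. -/
noncomputable def lowerT {n : ℕ} (lam : ℝ) (f : EuclideanSpace ℝ (Fin n) → ℝ)
    (x : EuclideanSpace ℝ (Fin n)) : ℝ :=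
  convEnv (fun y => f y + lam * ‖y‖ ^ 2) x - lam * ‖x‖ ^ 2

/-- Lower Moreau envelope. -/
noncomputable def moreauLower {n : ℕ} (lam : ℝ) (f : EuclideanSpace ℝ (Fin n) → ℝ)
    (x : EuclideanSpace ℝ (Fin n)) : ℝ :=
  ⨅ y : EuclideanSpace ℝ (Fin n), (f y + lam * ‖y - x‖ ^ 2)

/-- Upper Moreau envelope. -/
noncomputable def moreauUpper {n : ℕ} (lam : ℝ) (f : EuclideanSpace ℝ (Fin n) → ℝ)
    (x : EuclideanSpace ℝ (Fin n)) : ℝ :=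
  ⨆ y : EuclideanSpace ℝ (Fin n), (f y - lam * ‖y - x‖ ^ 2)

/-- Affine map `u ↦ ⟪v, u⟫ + c`. -/
noncomputable def affOf {n : ℕ} (v : EuclideanSpace ℝ (Fin n)) (c : ℝ) :
    EuclideanSpace ℝ (Fin n) →ᵃ[ℝ] ℝ where
  toFun := fun u => inner ℝ v u + c
  linear := (innerSL ℝ v).toLinearMap
  map_vadd' := by
    intro p w
    simp [inner_add_right]
    ring

lemma affOf_apply {n : ℕ} (v : EuclideanSpace ℝ (Fin n)) (c : ℝ)
    (u : EuclideanSpace ℝ (Fin n)) : affOf v c u = inner ℝ v u + c := rfl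

/-- The lower compensated convex transform equals the critical mixed Moreau envelope. -/
theorem lowerT_eq_mixed_moreau (n : ℕ) (hn : 1 ≤ n)
    (f : EuclideanSpace ℝ (Fin n) → ℝ) (A₁ A₂ : ℝ) (hA₁ : 0 ≤ A₁) (hA₂ : 0 ≤ A₂)
    (hf : ∀ x, f x ≥ -A₁ * ‖x‖ ^ 2 - A₂)
    (lam : ℝ) (hlam : A₁ < lam) (x : EuclideanSpace ℝ (Fin n)) :
    lowerT lam f x = moreauUpper lam (moreauLower lam f) x := by
  classical
  have hlam0 : 0 < lam := lt_of_le_of_lt hA₁ hlam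
  have hne : 0 < lam - A₁ := by linarith
  -- lower bound for the inner ℝ inf
  have hbdd : ∀ y : EuclideanSpace ℝ (Fin n),
      BddBelow (Set.range fun u : EuclideanSpace ℝ (Fin n) => f u + lam * ‖u - y‖ ^ 2) := by
    intro y
    refine ⟨lam * ‖y‖ ^ 2 - A₂ - (lam * ‖y‖) ^ 2 / (lam - A₁), ?_⟩
    rintro a ⟨u, rfl⟩
    show lam * ‖y‖ ^ 2 - A₂ - (lam * ‖y‖) ^ 2 / (lam - A₁) ≤ f u + lam * ‖u - y‖ ^ 2
    have h1 : ‖u‖ ^ 2 - 2 * ‖u‖ * ‖y‖ + ‖y‖ ^ 2 ≤ ‖u - y‖ ^ 2 := by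
      nlinarith [abs_norm_sub_norm_le u y, sq_abs (‖u‖ - ‖y‖), norm_nonneg (u - y),
        abs_nonneg (‖u‖ - ‖y‖)]
    have hq : 2 * lam * ‖y‖ * ‖u‖ - (lam - A₁) * ‖u‖ ^ 2 ≤ (lam * ‖y‖) ^ 2 / (lam - A₁) := by
      rw [le_div_iff₀ hne]
      nlinarith [sq_nonneg ((lam - A₁) * ‖u‖ - lam * ‖y‖)]
    have hfu := hf u
    have h1' := mul_le_mul_of_nonneg_left h1 hlam0.le
    linarith [hfu, hq, h1']
  have hML_le : ∀ y u : EuclideanSpace ℝ (Fin n),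
      moreauLower lam f y ≤ f u + lam * ‖u - y‖ ^ 2 := by
    intro y u; exact ciInf_le (hbdd y) u
  have hML_ge : ∀ (y : EuclideanSpace ℝ (Fin n)) (b : ℝ),
      (∀ u : EuclideanSpace ℝ (Fin n), b ≤ f u + lam * ‖u - y‖ ^ 2) →
      b ≤ moreauLower lam f y := by
    intro y b h; exact le_ciInf h
  -- the outer sup is bounded above
  have hRbdd : BddAbove (Set.range fun y : EuclideanSpace ℝ (Fin n) =>
      moreauLower lam f y - lam * ‖y - x‖ ^ 2) := by
    refine ⟨f x, ?_⟩
    rintro a ⟨y, rfl⟩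
    show moreauLower lam f y - lam * ‖y - x‖ ^ 2 ≤ f x
    have := hML_le y x
    have hr : ‖x - y‖ = ‖y - x‖ := norm_sub_rev x y
    rw [hr] at this
    have hpos : 0 ≤ lam * ‖y - x‖ ^ 2 := by positivity
    linarith
  -- the set of affine minorant values
  set S : Set ℝ := {a : ℝ | ∃ ℓ : EuclideanSpace ℝ (Fin n) →ᵃ[ℝ] ℝ,
      (∀ y, ℓ y ≤ f y + lam * ‖y‖ ^ 2) ∧ a = ℓ x} with hS
  have hSne : S.Nonempty := by
    refine ⟨AffineMap.const ℝ (EuclideanSpace ℝ (Fin n)) (-A₂) x,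
      AffineMap.const ℝ (EuclideanSpace ℝ (Fin n)) (-A₂), ?_, rfl⟩
    intro y
    have h0 := hf y
    have h1 : -A₂ ≤ f y + lam * ‖y‖ ^ 2 := by nlinarith [sq_nonneg ‖y‖]
    simpa using h1
  have hSbdd : BddAbove S := by
    refine ⟨f x + lam * ‖x‖ ^ 2, ?_⟩
    rintro a ⟨ℓ, hℓ, rfl⟩
    exact hℓ x
  have hgoal : sSup S - lam * ‖x‖ ^ 2
      = ⨆ y : EuclideanSpace ℝ (Fin n), (moreauLower lam f y - lam * ‖y - x‖ ^ 2) := by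
    apply le_antisymm
    · rw [sub_le_iff_le_add]
      apply csSup_le hSne
      rintro a ⟨ℓ, hℓ, rfl⟩
      -- Riesz representation of the linear part
      set v : EuclideanSpace ℝ (Fin n) :=
          (InnerProductSpace.toDual ℝ (EuclideanSpace ℝ (Fin n))).symm
          (LinearMap.toContinuousLinearMap ℓ.linear) with hv
      have hvu : ∀ u : EuclideanSpace ℝ (Fin n), (inner ℝ v u : ℝ) = ℓ.linear u := by
        intro u
        rw [hv, InnerProductSpace.toDual_symm_apply]
        simp
      have hdec : ∀ u : EuclideanSpace ℝ (Fin n), ℓ u = ℓ.linear u + ℓ 0 := by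
        intro u
        have h := ℓ.map_vadd 0 u
        simpa using h
      set y₀ : EuclideanSpace ℝ (Fin n) := (2 * lam)⁻¹ • v with hy₀
      have h2l : (2 * lam) ≠ 0 := by positivity
      have hsm : ∀ u : EuclideanSpace ℝ (Fin n),
          2 * lam * (inner ℝ u y₀ : ℝ) = ℓ.linear u := by
        intro u
        rw [hy₀, real_inner_smul_right]
        rw [real_inner_comm, hvu u]
        field_simp
      -- lower bound for moreauLower at y₀
      have hM : ℓ 0 + lam * ‖y₀‖ ^ 2 ≤ moreauLower lam f y₀ := by
        apply hML_ge
        intro u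
        have h1 : ℓ u ≤ f u + lam * ‖u‖ ^ 2 := hℓ u
        rw [hdec u] at h1
        have h2 : ‖u - y₀‖ ^ 2 = ‖u‖ ^ 2 - 2 * inner ℝ u y₀ + ‖y₀‖ ^ 2 :=
          norm_sub_sq_real u y₀
        have h3 := hsm u
        nlinarith [h1, h2, h3]
      have hx2 : ‖y₀ - x‖ ^ 2 = ‖y₀‖ ^ 2 - 2 * inner ℝ y₀ x + ‖x‖ ^ 2 :=
        norm_sub_sq_real y₀ x
      have hx3 : 2 * lam * (inner ℝ y₀ x : ℝ) = ℓ.linear x := by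
        have h := hsm x
        rw [real_inner_comm] at h
        exact h
      have key : ℓ x - lam * ‖x‖ ^ 2 ≤ moreauLower lam f y₀ - lam * ‖y₀ - x‖ ^ 2 := by
        rw [hdec x]
        nlinarith [hM, hx2, hx3]
      have hle : moreauLower lam f y₀ - lam * ‖y₀ - x‖ ^ 2
          ≤ ⨆ y : EuclideanSpace ℝ (Fin n), (moreauLower lam f y - lam * ‖y - x‖ ^ 2) :=
        le_ciSup hRbdd y₀
      linarith
    · apply ciSup_le
      intro y
      have hmem : (inner ℝ ((2 * lam) • y) x + (moreauLower lam f y - lam * ‖y‖ ^ 2) : ℝ) ∈ S := by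
        refine ⟨affOf ((2 * lam) • y) (moreauLower lam f y - lam * ‖y‖ ^ 2), ?_, rfl⟩
        intro u
        rw [affOf_apply, real_inner_smul_left]
        have h1 := hML_le y u
        have h2 : ‖u - y‖ ^ 2 = ‖u‖ ^ 2 - 2 * inner ℝ u y + ‖y‖ ^ 2 := norm_sub_sq_real u y
        have h3 : (inner ℝ y u : ℝ) = inner ℝ u y := real_inner_comm u y
        nlinarith [h1, h2, h3]
      have hle := le_csSup hSbdd hmem
      have h2 : ‖y - x‖ ^ 2 = ‖y‖ ^ 2 - 2 * inner ℝ y x + ‖x‖ ^ 2 := norm_sub_sq_real y x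
      have h3 : (inner ℝ ((2 * lam) • y) x : ℝ) = 2 * lam * inner ℝ y x :=
        real_inner_smul_left y x (2 * lam)
      nlinarith [hle, h2, h3]
  simpa [lowerT, convEnv, moreauUpper, hS] using hgoal
end

section
/- Let n ≥ 1 and let f : ℝⁿ → ℝ satisfy f(x) ≥ −A₁|x|² − A₂ for all x ∈ ℝⁿ, for some constants A₁, A₂ ≥ 0. Then (i) for all A₁ < λ < τ < ∞ and all x ∈ ℝⁿ, C^l_λ(f)(x) ≤ C^l_τ(f)(x) ≤ f(x); and (ii) if in addition f is lower semicontinuous, then for every x ∈ ℝⁿ, C^l_λ(f)(x) → f(x) as λ → ∞. -/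
lemma exists_aff' {n : ℕ} (x : EuclideanSpace ℝ (Fin n)) (μ c : ℝ) :
    ∃ ℓ : EuclideanSpace ℝ (Fin n) →ᵃ[ℝ] ℝ,
      ∀ y, ℓ y = μ * (‖y‖^2 - ‖y - x‖^2) + c := by
  refine ⟨((2*μ) • (innerSL ℝ x).toLinearMap).toAffineMap +
      AffineMap.const ℝ _ (c - μ*‖x‖^2), ?_⟩
  intro y
  have h : ‖y - x‖^2 = ‖y‖^2 - 2*(inner ℝ y x : ℝ) + ‖x‖^2 := norm_sub_sq_real y x
  have h2 : (inner ℝ x y : ℝ) = inner ℝ y x := real_inner_comm y x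
  have h3 : (((2*μ) • (innerSL ℝ x).toLinearMap).toAffineMap +
      AffineMap.const ℝ (EuclideanSpace ℝ (Fin n)) (c - μ*‖x‖^2)) y
      = (2*μ) * (inner ℝ x y : ℝ) + (c - μ*‖x‖^2) := by
    simp only [AffineMap.coe_add, Pi.add_apply, LinearMap.coe_toAffineMap,
      LinearMap.smul_apply, ContinuousLinearMap.coe_coe, innerSL_apply_apply,
      AffineMap.const_apply, smul_eq_mul]
  rw [h3]
  linear_combination μ * h + 2*μ*h2

lemma convEnv_bdd' {n : ℕ} (g : EuclideanSpace ℝ (Fin n) → ℝ)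
    (x : EuclideanSpace ℝ (Fin n)) :
    BddAbove {a : ℝ | ∃ ℓ : EuclideanSpace ℝ (Fin n) →ᵃ[ℝ] ℝ,
      (∀ y, ℓ y ≤ g y) ∧ a = ℓ x} := by
  refine ⟨g x, ?_⟩
  rintro a ⟨ℓ, hℓ, rfl⟩
  exact hℓ x

lemma le_convEnv' {n : ℕ} (g : EuclideanSpace ℝ (Fin n) → ℝ)
    (ℓ : EuclideanSpace ℝ (Fin n) →ᵃ[ℝ] ℝ) (hℓ : ∀ y, ℓ y ≤ g y)
    (x : EuclideanSpace ℝ (Fin n)) : ℓ x ≤ convEnv g x :=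
  le_csSup (convEnv_bdd' g x) ⟨ℓ, hℓ, rfl⟩

lemma aff_ne' {n : ℕ} (f : EuclideanSpace ℝ (Fin n) → ℝ) (A₁ A₂ : ℝ)
    (hf : ∀ x, f x ≥ -A₁ * ‖x‖ ^ 2 - A₂) (lam : ℝ) (hlam : A₁ ≤ lam)
    (x : EuclideanSpace ℝ (Fin n)) :
    Set.Nonempty {a : ℝ | ∃ ℓ : EuclideanSpace ℝ (Fin n) →ᵃ[ℝ] ℝ,
      (∀ y, ℓ y ≤ f y + lam * ‖y‖ ^ 2) ∧ a = ℓ x} := by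
  refine ⟨-A₂, AffineMap.const ℝ _ (-A₂), fun y => ?_, by simp⟩
  have := hf y
  simp only [AffineMap.const_apply]
  nlinarith [sq_nonneg ‖y‖]

lemma lowerT_le_self' {n : ℕ} (f : EuclideanSpace ℝ (Fin n) → ℝ) (A₁ A₂ : ℝ)
    (hf : ∀ x, f x ≥ -A₁ * ‖x‖ ^ 2 - A₂) (lam : ℝ) (hlam : A₁ ≤ lam)
    (x : EuclideanSpace ℝ (Fin n)) : lowerT lam f x ≤ f x := by
  have h : convEnv (fun y => f y + lam * ‖y‖ ^ 2) x ≤ f x + lam * ‖x‖ ^ 2 := by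
    refine csSup_le (aff_ne' f A₁ A₂ hf lam hlam x) ?_
    rintro a ⟨ℓ, hℓ, rfl⟩
    exact hℓ x
  simp only [lowerT]
  linarith

/-- Monotonicity in λ and approximation from below of the lower compensated
convex transform. -/
theorem lowerT_monotone_and_tendsto (n : ℕ) (hn : 1 ≤ n)
    (f : EuclideanSpace ℝ (Fin n) → ℝ) (A₁ A₂ : ℝ) (hA₁ : 0 ≤ A₁) (hA₂ : 0 ≤ A₂)
    (hf : ∀ x, f x ≥ -A₁ * ‖x‖ ^ 2 - A₂) :
    (∀ lam tau : ℝ, A₁ < lam → lam < tau →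
      ∀ x, lowerT lam f x ≤ lowerT tau f x ∧ lowerT tau f x ≤ f x) ∧
    (LowerSemicontinuous f → ∀ x,
      Filter.Tendsto (fun lam : ℝ => lowerT lam f x) Filter.atTop (nhds (f x))) := by
  constructor
  · intro lam tau hlam htau x
    constructor
    · -- monotonicity
      have h : convEnv (fun y => f y + lam * ‖y‖ ^ 2) x
          ≤ convEnv (fun y => f y + tau * ‖y‖ ^ 2) x - (tau - lam) * ‖x‖ ^ 2 := by
        refine csSup_le (aff_ne' f A₁ A₂ hf lam hlam.le x) ?_
        rintro a ⟨ℓ, hℓ, rfl⟩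
        obtain ⟨ℓ₂, hℓ₂⟩ := exists_aff' x (tau - lam) 0
        have hmin : ∀ y, (ℓ + ℓ₂) y ≤ f y + tau * ‖y‖ ^ 2 := by
          intro y
          have h1 : ℓ y ≤ f y + lam * ‖y‖ ^ 2 := hℓ y
          have h2 := hℓ₂ y
          have h3 : (ℓ + ℓ₂) y = ℓ y + ℓ₂ y := rfl
          rw [h3, h2]
          nlinarith [sq_nonneg ‖y - x‖]
        have hle := le_convEnv' _ (ℓ + ℓ₂) hmin x
        have h4 : (ℓ + ℓ₂) x = ℓ x + ((tau - lam) * (‖x‖^2 - ‖x - x‖^2) + 0) := by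
          rw [← hℓ₂ x]; rfl
        simp only [sub_self, norm_zero] at h4
        have h5 : (ℓ + ℓ₂) x = ℓ x + (tau - lam) * ‖x‖^2 := by rw [h4]; ring
        linarith [hle, h5 ▸ hle]
      simp only [lowerT]
      linarith
    · exact lowerT_le_self' f A₁ A₂ hf tau (by linarith) x
  · intro hlsc x
    rw [Metric.tendsto_atTop]
    intro ε hε
    have h1 : f x - ε/2 < f x := by linarith
    have hev := hlsc x (f x - ε/2) h1
    rw [Metric.eventually_nhds_iff] at hev
    obtain ⟨δ, hδ, hball⟩ := hev
    set C := max 0 (f x + A₂ + 2*A₁*‖x‖^2) with hC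
    have hC0 : 0 ≤ C := le_max_left _ _
    have hC1 : f x + A₂ + 2*A₁*‖x‖^2 ≤ C := le_max_right _ _
    refine ⟨max (A₁+1) (2*A₁ + C/δ^2), fun lam hlam => ?_⟩
    have hlam1 : A₁ + 1 ≤ lam := le_trans (le_max_left _ _) hlam
    have hlam2 : 2*A₁ + C/δ^2 ≤ lam := le_trans (le_max_right _ _) hlam
    have hub : lowerT lam f x ≤ f x :=
      lowerT_le_self' f A₁ A₂ hf lam (by linarith) x
    obtain ⟨ℓ, hℓ⟩ := exists_aff' x lam (f x - ε/2)
    have hmin : ∀ y, ℓ y ≤ f y + lam * ‖y‖ ^ 2 := by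
      intro y
      rw [hℓ y]
      by_cases hy : dist y x < δ
      · have hfy := hball hy
        have : 0 ≤ lam * ‖y - x‖^2 := by nlinarith [sq_nonneg ‖y - x‖]
        linarith
      · push_neg at hy
        have hdyx : dist y x = ‖y - x‖ := dist_eq_norm y x
        have ht : δ^2 ≤ ‖y - x‖^2 := by nlinarith [hδ, norm_nonneg (y - x)]
        have hynorm : ‖y‖ ≤ ‖y - x‖ + ‖x‖ := by
          calc ‖y‖ = ‖(y - x) + x‖ := by rw [sub_add_cancel]
          _ ≤ ‖y - x‖ + ‖x‖ := norm_add_le _ _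
        have hnorm : ‖y‖^2 ≤ 2*‖y - x‖^2 + 2*‖x‖^2 := by
          have h5 := mul_self_le_mul_self (norm_nonneg y) hynorm
          nlinarith [h5, sq_nonneg (‖y - x‖ - ‖x‖)]
        have hd2 : (0:ℝ) < δ^2 := by positivity
        have e1 : C/δ^2*δ^2 = C := div_mul_cancel₀ C (ne_of_gt hd2)
        have e2 : C/δ^2*δ^2 ≤ C/δ^2*‖y - x‖^2 :=
          mul_le_mul_of_nonneg_left ht (by positivity)
        have key : 2*A₁*‖y - x‖^2 + C ≤ lam * ‖y - x‖^2 := by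
          have e3 : (2*A₁ + C/δ^2) * ‖y - x‖^2 ≤ lam * ‖y - x‖^2 :=
            mul_le_mul_of_nonneg_right hlam2 (sq_nonneg _)
          nlinarith
        have hfy := hf y
        have hA1n := mul_le_mul_of_nonneg_left hnorm hA₁
        nlinarith
    have hlx : ℓ x = lam * ‖x‖^2 + (f x - ε/2) := by
      have := hℓ x
      simp only [sub_self, norm_zero] at this
      rw [this]; ring
    have hge : f x - ε/2 ≤ lowerT lam f x := by
      have hle := le_convEnv' (fun y => f y + lam * ‖y‖ ^ 2) ℓ hmin x
      simp only [lowerT]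
      rw [hlx] at hle
      linarith
    rw [Real.dist_eq, abs_lt]
    constructor <;> linarith
end

section
/- Let n ≥ 1 and let f : ℝⁿ → ℝ be differentiable with gradient Df Lipschitz on ℝⁿ with Lipschitz constant L, i.e. |Df(x) − Df(y)| ≤ L|x − y| for all x, y ∈ ℝⁿ. Then for every λ ≥ L and every x ∈ ℝⁿ, C^l_λ(f)(x) = f(x). -/
open RealInnerProductSpace

section Aux

variable {n : ℕ}

/-- Tangent-plane inequality for `g = f + lam ‖·‖²`. -/
lemma tangent_le (n : ℕ) (hn : 1 ≤ n)
    (f : EuclideanSpace ℝ (Fin n) → ℝ) (f' : EuclideanSpace ℝ (Fin n) → EuclideanSpace ℝ (Fin n))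
    (L : ℝ) (hdiff : ∀ x, HasGradientAt f (f' x) x)
    (hLip : ∀ x y, ‖f' x - f' y‖ ≤ L * ‖x - y‖)
    (lam : ℝ) (hlam : L ≤ lam) (x y : EuclideanSpace ℝ (Fin n)) :
    f x + lam * ‖x‖ ^ 2 + ⟪f' x + (2 * lam) • x, y - x⟫ ≤ f y + lam * ‖y‖ ^ 2 := by
  -- L ≥ 0
  have hL0 : 0 ≤ L := by
    have h := hLip (EuclideanSpace.single ⟨0, hn⟩ (1 : ℝ)) 0
    simp only [sub_zero] at h
    have h1 : ‖EuclideanSpace.single (⟨0, hn⟩ : Fin n) (1 : ℝ)‖ = 1 := by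
      simp [EuclideanSpace.norm_single]
    nlinarith [norm_nonneg (f' (EuclideanSpace.single (⟨0, hn⟩ : Fin n) (1 : ℝ)) - f' 0)]
  set v := y - x with hv
  -- the 1D function along the segment
  set c : ℝ → EuclideanSpace ℝ (Fin n) := fun t => x + t • v with hc
  have hcd : ∀ t : ℝ, HasDerivAt c v t := by
    intro t
    exact (((hasDerivAt_id t).smul_const v).const_add x).congr_deriv (one_smul ℝ v)
  set φ : ℝ → ℝ := fun t =>
    f (c t) + lam * ⟪c t, c t⟫ - t * ⟪f' x + (2 * lam) • x, v⟫ with hφ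
  have hder : ∀ t : ℝ, HasDerivAt φ
      (⟪f' (c t), v⟫ + lam * (⟪c t, v⟫ + ⟪v, c t⟫) - ⟪f' x + (2 * lam) • x, v⟫) t := by
    intro t
    have h1 : HasDerivAt (fun t => f (c t)) (⟪f' (c t), v⟫) t := by
      have := (hdiff (c t)).hasFDerivAt.comp_hasDerivAt t (hcd t)
      exact this
    have h2 : HasDerivAt (fun t => ⟪c t, c t⟫) (⟪c t, v⟫ + ⟪v, c t⟫) t :=
      (hcd t).inner ℝ (hcd t)
    have h3 : HasDerivAt (fun t : ℝ => t * ⟪f' x + (2 * lam) • x, v⟫)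
        (⟪f' x + (2 * lam) • x, v⟫) t := by
      simpa using (hasDerivAt_id t).mul_const (⟪f' x + (2 * lam) • x, v⟫)
    exact (h1.add ((h2.const_mul lam))).sub h3
  have hmono : MonotoneOn φ (Set.Icc (0:ℝ) 1) := by
    apply monotoneOn_of_deriv_nonneg (convex_Icc 0 1)
    · exact fun t _ => (hder t).continuousAt.continuousWithinAt
    · exact fun t _ => ((hder t).differentiableAt).differentiableWithinAt
    · intro t ht
      rw [interior_Icc] at ht
      rw [(hder t).deriv]
      have hct : c t - x = t • v := by simp [hc]
      have hlip' : ‖f' (c t) - f' x‖ ≤ L * (t * ‖v‖) := by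
        have := hLip (c t) x
        rwa [hct, norm_smul, Real.norm_eq_abs, abs_of_pos ht.1] at this
      have hinner : ⟪f' (c t) - f' x, v⟫ ≥ -(L * (t * ‖v‖) * ‖v‖) := by
        have := abs_real_inner_le_norm (f' (c t) - f' x) v
        have h2 : ‖f' (c t) - f' x‖ * ‖v‖ ≤ L * (t * ‖v‖) * ‖v‖ :=
          mul_le_mul_of_nonneg_right hlip' (norm_nonneg v)
        nlinarith [neg_abs_le (⟪f' (c t) - f' x, v⟫)]
      have hexp : ⟪f' (c t), v⟫ + lam * (⟪c t, v⟫ + ⟪v, c t⟫) - ⟪f' x + (2 * lam) • x, v⟫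
          = ⟪f' (c t) - f' x, v⟫ + 2 * lam * t * ‖v‖ ^ 2 := by
        simp only [hc, inner_add_left, inner_add_right, inner_smul_left, inner_smul_right,
          inner_sub_left, real_inner_self_eq_norm_sq, starRingEnd_apply, star_trivial]
        rw [real_inner_comm v x]
        ring
      rw [hexp]
      have h4 : 0 ≤ (2 * lam - L) * (t * ‖v‖ ^ 2) :=
        mul_nonneg (by linarith) (mul_nonneg ht.1.le (sq_nonneg _))
      nlinarith [hinner, h4]
  have h01 := hmono (Set.left_mem_Icc.2 zero_le_one) (Set.right_mem_Icc.2 zero_le_one)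
      zero_le_one
  have hc0 : c 0 = x := by simp [hc]
  have hc1 : c 1 = y := by simp [hc, hv]
  simp only [hφ, hc0, hc1, zero_mul, sub_zero, one_mul] at h01
  rw [real_inner_self_eq_norm_sq, real_inner_self_eq_norm_sq] at h01
  linarith

end Aux

/-- If `f` has an `L`-Lipschitz gradient then `C^l_λ(f) = f` for all `λ ≥ L`. -/
theorem lowerT_eq_self_of_lipschitz_gradient (n : ℕ) (hn : 1 ≤ n)
    (f : EuclideanSpace ℝ (Fin n) → ℝ) (f' : EuclideanSpace ℝ (Fin n) → EuclideanSpace ℝ (Fin n))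
    (L : ℝ) (hdiff : ∀ x, HasGradientAt f (f' x) x)
    (hLip : ∀ x y, ‖f' x - f' y‖ ≤ L * ‖x - y‖)
    (lam : ℝ) (hlam : L ≤ lam) (x : EuclideanSpace ℝ (Fin n)) :
    lowerT lam f x = f x := by
  set g : EuclideanSpace ℝ (Fin n) → ℝ := fun y => f y + lam * ‖y‖ ^ 2 with hg
  set w : EuclideanSpace ℝ (Fin n) := f' x + (2 * lam) • x with hw
  set ℓ : EuclideanSpace ℝ (Fin n) →ᵃ[ℝ] ℝ :=
    (innerSL ℝ w).toLinearMap.toAffineMap + AffineMap.const ℝ _ (g x - ⟪w, x⟫) with hℓ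
  have hℓapp : ∀ y, ℓ y = ⟪w, y⟫ + (g x - ⟪w, x⟫) := fun y => rfl
  have hℓle : ∀ y, ℓ y ≤ g y := by
    intro y
    have := tangent_le n hn f f' L hdiff hLip lam hlam x y
    rw [hℓapp y]
    simp only [inner_sub_right] at this ⊢
    simp only [hg, hw]
    linarith
  have hℓx : ℓ x = g x := by rw [hℓapp x]; ring
  set S := {a : ℝ | ∃ ℓ' : EuclideanSpace ℝ (Fin n) →ᵃ[ℝ] ℝ, (∀ y, ℓ' y ≤ g y) ∧ a = ℓ' x}
  have hmem : g x ∈ S := ⟨ℓ, hℓle, hℓx.symm⟩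
  have hbdd : ∀ a ∈ S, a ≤ g x := by
    rintro a ⟨ℓ', hle, rfl⟩
    exact hle x
  have hsup : sSup S = g x :=
    le_antisymm (csSup_le ⟨g x, hmem⟩ hbdd) (le_csSup ⟨g x, hbdd⟩ hmem)
  simp only [lowerT, convEnv]
  rw [show {a : ℝ | ∃ ℓ' : EuclideanSpace ℝ (Fin n) →ᵃ[ℝ] ℝ,
      (∀ y, ℓ' y ≤ f y + lam * ‖y‖ ^ 2) ∧ a = ℓ' x} = S from rfl, hsup]
  simp [hg]
end

section
/- Let n ≥ 1 and suppose f : ℝⁿ → ℝ is bounded with |f(x)| ≤ M for some M > 0 and all x ∈ ℝⁿ. Let λ > 0, x₀ ∈ ℝⁿ and set R_{λ,M} = (2 + √2)√(M/λ). Then there exist points x₁, …, x_{n+1} in the closed ball B̄(x₀; R_{λ,M}) with x_i ≠ x₀, and coefficients λ₁, …, λ_{n+1} ≥ 0 with Σ_{i=1}^{n+1} λ_i = 1 and Σ_{i=1}^{n+1} λ_i x_i = x₀, such that C^l_λ(f)(x_i) = f̲(x_i) for every i = 1, …, n+1, where f̲ denotes the lower semicontinuous envelope of f. -/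
open scoped BigOperators

/-- Lower semicontinuous envelope: `f̲(x) = liminf_{y → x} f(y)` along the
neighbourhood filter of `x`. -/
noncomputable def lscEnv {n : ℕ} (f : EuclideanSpace ℝ (Fin n) → ℝ)
    (x : EuclideanSpace ℝ (Fin n)) : ℝ :=
  Filter.liminf f (nhds x)

open Filter Set Metric
open scoped RealInnerProductSpace Pointwise

section Aux

variable {n : ℕ}

abbrev Eucl (n : ℕ) := EuclideanSpace ℝ (Fin n)

/-- affine map from linear map and constant -/
noncomputable def mkAff (φ : Eucl n →ₗ[ℝ] ℝ) (b : ℝ) : Eucl n →ᵃ[ℝ] ℝ :=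
  ⟨fun y => φ y + b, φ, by intro p v; simp [map_add]; ring⟩

@[simp] lemma mkAff_apply (φ : Eucl n →ₗ[ℝ] ℝ) (b : ℝ) (y : Eucl n) :
    mkAff φ b y = φ y + b := rfl

lemma lscEnv_eq (f : Eucl n → ℝ) (x : Eucl n) :
    lscEnv f x = sSup {a | ∀ᶠ y in nhds x, a ≤ f y} := Filter.liminf_eq

variable {f : Eucl n → ℝ} {M : ℝ}

lemma lsc_nonempty (hf : ∀ x, |f x| ≤ M) (x : Eucl n) :
    {a | ∀ᶠ y in nhds x, a ≤ f y}.Nonempty :=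
  ⟨-M, Filter.Eventually.of_forall fun y => (abs_le.1 (hf y)).1⟩

lemma lsc_bdd (hf : ∀ x, |f x| ≤ M) (x : Eucl n) :
    BddAbove {a | ∀ᶠ y in nhds x, a ≤ f y} :=
  ⟨M, fun a ha => le_trans ha.self_of_nhds ((abs_le.1 (hf x)).2)⟩

lemma lscEnv_le_self (hf : ∀ x, |f x| ≤ M) (x : Eucl n) : lscEnv f x ≤ f x := by
  rw [lscEnv_eq]
  exact csSup_le (lsc_nonempty hf x) fun a ha => ha.self_of_nhds

lemma neg_M_le_lscEnv (hf : ∀ x, |f x| ≤ M) (x : Eucl n) : -M ≤ lscEnv f x := by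
  rw [lscEnv_eq]
  exact le_csSup (lsc_bdd hf x) (Filter.Eventually.of_forall fun y => (abs_le.1 (hf y)).1)

lemma lscEnv_le_M (hf : ∀ x, |f x| ≤ M) (x : Eucl n) : lscEnv f x ≤ M :=
  le_trans (lscEnv_le_self hf x) ((abs_le.1 (hf x)).2)

lemma cont_le_lscEnv (hf : ∀ x, |f x| ≤ M) {u : Eucl n → ℝ} (hu : Continuous u)
    (hle : ∀ y, u y ≤ f y) (x : Eucl n) : u x ≤ lscEnv f x := by
  rw [lscEnv_eq]
  refine le_of_forall_sub_le fun ε hε => ?_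
  have hev : ∀ᶠ y in nhds x, u x - ε ≤ f y := by
    have : ∀ᶠ y in nhds x, u x - ε < u y := by
      have : IsOpen (u ⁻¹' Ioi (u x - ε)) := (isOpen_Ioi).preimage hu
      exact this.eventually_mem (by simp [hε] : x ∈ u ⁻¹' Ioi (u x - ε))
    exact this.mono fun y hy => le_trans hy.le (hle y)
  exact le_csSup (lsc_bdd hf x) hev

lemma lsc_lscEnv (hf : ∀ x, |f x| ≤ M) : LowerSemicontinuous (lscEnv f) := by
  intro x b hb
  rw [lscEnv_eq] at hb
  obtain ⟨a, ha, hba⟩ := exists_lt_of_lt_csSup (lsc_nonempty hf x) hb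
  simp only [mem_setOf_eq, _root_.eventually_nhds_iff] at ha
  obtain ⟨V, hV, hVopen, hxV⟩ := ha
  have : ∀ᶠ y in nhds x, y ∈ V := hVopen.eventually_mem hxV
  refine this.mono fun y hy => lt_of_lt_of_le hba ?_
  rw [lscEnv_eq]
  refine le_csSup (lsc_bdd hf y) ?_
  show ∀ᶠ z in nhds y, a ≤ f z
  rw [_root_.eventually_nhds_iff]
  exact ⟨V, hV, hVopen, hy⟩

end Aux

section Env

variable {n : ℕ} {f : Eucl n → ℝ} {M lam : ℝ}

lemma aff_continuous (ℓ : Eucl n →ᵃ[ℝ] ℝ) : Continuous ℓ :=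
  AffineMap.continuous_of_finiteDimensional ℓ

lemma minorant_iff (hf : ∀ x, |f x| ≤ M) (ℓ : Eucl n →ᵃ[ℝ] ℝ) :
    (∀ y, ℓ y ≤ f y + lam * ‖y‖ ^ 2) ↔ (∀ y, ℓ y ≤ lscEnv f y + lam * ‖y‖ ^ 2) := by
  constructor
  · intro h x
    have hu : Continuous fun y : Eucl n => ℓ y - lam * ‖y‖ ^ 2 :=
      (aff_continuous ℓ).sub (continuous_const.mul (continuous_norm.pow 2))
    have := cont_le_lscEnv hf hu (fun y => by linarith [h y]) x
    linarith
  · intro h y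
    linarith [h y, lscEnv_le_self hf y]

lemma envSet_nonempty (hf : ∀ x, |f x| ≤ M) (hlam : 0 < lam) (x : Eucl n) :
    ∃ ℓ : Eucl n →ᵃ[ℝ] ℝ, (∀ y, ℓ y ≤ f y + lam * ‖y‖ ^ 2) := by
  refine ⟨mkAff 0 (-M), fun y => ?_⟩
  have h1 : -M ≤ f y := (abs_le.1 (hf y)).1
  have h2 : 0 ≤ lam * ‖y‖ ^ 2 := mul_nonneg hlam.le (by positivity)
  simp only [mkAff_apply, LinearMap.zero_apply, zero_add]
  linarith

lemma convEnv_f_eq (x : Eucl n) : convEnv (fun y => f y + lam * ‖y‖ ^ 2) x =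
    sSup {a : ℝ | ∃ ℓ : EuclideanSpace ℝ (Fin n) →ᵃ[ℝ] ℝ,
      (∀ y, ℓ y ≤ f y + lam * ‖y‖ ^ 2) ∧ a = ℓ x} := by
  simp only [convEnv]

lemma envSet_bdd (x : Eucl n) :
    BddAbove {a : ℝ | ∃ ℓ : EuclideanSpace ℝ (Fin n) →ᵃ[ℝ] ℝ,
      (∀ y, ℓ y ≤ f y + lam * ‖y‖ ^ 2) ∧ a = ℓ x} := by
  refine ⟨f x + lam * ‖x‖ ^ 2, ?_⟩
  rintro a ⟨ℓ, hm, rfl⟩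
  exact hm x

lemma le_convEnv'_s3 {ℓ : Eucl n →ᵃ[ℝ] ℝ} (hm : ∀ y, ℓ y ≤ f y + lam * ‖y‖ ^ 2) (x : Eucl n) :
    ℓ x ≤ convEnv (fun y => f y + lam * ‖y‖ ^ 2) x := by
  rw [convEnv_f_eq]
  exact le_csSup (envSet_bdd x) ⟨ℓ, hm, rfl⟩

lemma le_convEnv (hf : ∀ x, |f x| ≤ M) {ℓ : Eucl n →ᵃ[ℝ] ℝ}
    (hm : ∀ y, ℓ y ≤ lscEnv f y + lam * ‖y‖ ^ 2) (x : Eucl n) :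
    ℓ x ≤ convEnv (fun y => f y + lam * ‖y‖ ^ 2) x :=
  le_convEnv'_s3 ((minorant_iff hf ℓ).2 hm) x

lemma convEnv_le (hf : ∀ x, |f x| ≤ M) (hlam : 0 < lam) (x : Eucl n) :
    convEnv (fun y => f y + lam * ‖y‖ ^ 2) x ≤ lscEnv f x + lam * ‖x‖ ^ 2 := by
  obtain ⟨ℓ₀, hm₀⟩ := envSet_nonempty hf hlam x
  rw [convEnv_f_eq]
  refine csSup_le ⟨ℓ₀ x, ℓ₀, hm₀, rfl⟩ ?_
  rintro a ⟨ℓ, hm, rfl⟩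
  exact (minorant_iff hf ℓ).1 hm x

lemma paraboloid_le_convEnv (hf : ∀ x, |f x| ≤ M) (hlam : 0 < lam) (p : Eucl n) :
    lam * ‖p‖ ^ 2 - M ≤ convEnv (fun y => f y + lam * ‖y‖ ^ 2) p := by
  set ℓ : Eucl n →ᵃ[ℝ] ℝ :=
    mkAff ((2 * lam) • ((innerSL ℝ p).toLinearMap)) (-(lam * ‖p‖ ^ 2) - M) with hℓ
  have happ : ∀ y, ℓ y = 2 * lam * (inner ℝ p y : ℝ) - lam * ‖p‖ ^ 2 - M := by
    intro y
    simp only [hℓ, mkAff_apply, LinearMap.smul_apply, ContinuousLinearMap.coe_coe,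
      innerSL_apply_apply, smul_eq_mul]
    ring
  have hmin : ∀ y, ℓ y ≤ f y + lam * ‖y‖ ^ 2 := by
    intro y
    have h1 : 0 ≤ lam * ‖y - p‖ ^ 2 := mul_nonneg hlam.le (by positivity)
    have h2 : ‖y - p‖ ^ 2 = ‖y‖ ^ 2 - 2 * (inner ℝ y p : ℝ) + ‖p‖ ^ 2 := norm_sub_sq_real y p
    have h3 : (inner ℝ y p : ℝ) = (inner ℝ p y : ℝ) := real_inner_comm p y
    have h4 : -M ≤ f y := (abs_le.1 (hf y)).1
    rw [happ y]
    nlinarith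
  have := le_convEnv'_s3 hmin p
  rw [happ p, real_inner_self_eq_norm_sq] at this
  linarith

lemma convexOn_convEnv (hf : ∀ x, |f x| ≤ M) (hlam : 0 < lam) :
    ConvexOn ℝ univ (convEnv (fun y => f y + lam * ‖y‖ ^ 2)) := by
  refine ⟨convex_univ, ?_⟩
  intro x _ y _ a b ha hb hab
  obtain ⟨ℓ₀, hm₀⟩ := envSet_nonempty hf hlam x
  rw [convEnv_f_eq]
  refine csSup_le ⟨ℓ₀ (a • x + b • y), ℓ₀, hm₀, rfl⟩ ?_
  rintro r ⟨ℓ, hm, rfl⟩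
  have hcombo : ℓ (a • x + b • y) = a * ℓ x + b * ℓ y := by
    have h1 : a • x + b • y = AffineMap.lineMap x y b := by
      rw [AffineMap.lineMap_apply_module]
      rw [show a = 1 - b by linarith]
    rw [h1, AffineMap.apply_lineMap, AffineMap.lineMap_apply_module]
    rw [show a = 1 - b by linarith]
    simp [smul_eq_mul]
  rw [hcombo]
  have h1 := le_convEnv'_s3 hm x
  have h2 := le_convEnv'_s3 hm y
  have := add_le_add (mul_le_mul_of_nonneg_left h1 ha) (mul_le_mul_of_nonneg_left h2 hb)
  simpa [smul_eq_mul] using this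

end Env

section Support

variable {n : ℕ} {f : Eucl n → ℝ} {M lam : ℝ}

lemma exists_support (hf : ∀ x, |f x| ≤ M) (hlam : 0 < lam) (p : Eucl n) :
    ∃ ℓ : Eucl n →ᵃ[ℝ] ℝ, (∀ y, ℓ y ≤ f y + lam * ‖y‖ ^ 2) ∧
      ℓ p = convEnv (fun y => f y + lam * ‖y‖ ^ 2) p := by
  set co := convEnv (fun y => f y + lam * ‖y‖ ^ 2) with hco
  have hcoConv : ConvexOn ℝ univ co := convexOn_convEnv hf hlam
  have hcole : ∀ y, co y ≤ lam * ‖y‖ ^ 2 + M := by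
    intro y
    have h1 := convEnv_le hf hlam y
    have h2 := lscEnv_le_M hf y
    rw [← hco] at h1
    linarith
  set epi : Set (Eucl n × ℝ) := {q | co q.1 ≤ q.2} with hepi
  have hepiConv : Convex ℝ epi := by
    have h := hcoConv.convex_epigraph
    have : {q : Eucl n × ℝ | q.1 ∈ univ ∧ co q.1 ≤ q.2} = epi := by
      ext q; simp [hepi]
    rwa [this] at h
  set U : Set (Eucl n × ℝ) := {q | lam * ‖q.1‖ ^ 2 + M < q.2} with hU
  have hUopen : IsOpen U := by
    have hcont : Continuous fun q : Eucl n × ℝ => lam * ‖q.1‖ ^ 2 + M :=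
      (continuous_const.mul ((continuous_norm.comp continuous_fst).pow 2)).add continuous_const
    exact isOpen_lt hcont continuous_snd
  have hUsub : U ⊆ epi := fun q hq => le_of_lt (lt_of_le_of_lt (hcole q.1) hq)
  have hUint : U ⊆ interior epi := interior_maximal hUsub hUopen
  have hkey : ∀ (y : Eucl n) (s : ℝ), 0 < s → (y, co y + s) ∈ interior epi := by
    intro y s hs
    by_cases hbig : lam * ‖y‖ ^ 2 + M + 1 ≤ co y + s
    · exact hUint (by simp only [hU, mem_setOf_eq]; linarith)
    · push_neg at hbig
      set T := lam * ‖y‖ ^ 2 + M + 1 with hT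
      have hyT : co y < T := by have := hcole y; simp only [hT]; linarith
      have hTi : (y, T) ∈ interior epi := hUint (by simp only [hU, mem_setOf_eq, hT]; linarith)
      have hyepi : (y, co y) ∈ epi := by simp [hepi]
      set a := s / (T - co y) with ha
      have ha0 : 0 < a := div_pos hs (by linarith)
      have ha1 : a ≤ 1 := by
        rw [ha, div_le_one (by linarith)]
        linarith
      have hcombo := hepiConv.combo_interior_self_subset_interior ha0 (by linarith : (0:ℝ) ≤ 1 - a)
        (by ring)
      have hmem : (y, co y + s) ∈ a • interior epi + (1 - a) • epi := by
        refine ⟨a • (y, T), smul_mem_smul_set hTi, (1 - a) • (y, co y), smul_mem_smul_set hyepi, ?_⟩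
        have haT : a * (T - co y) = s := by
          rw [ha, div_mul_cancel₀]
          linarith
        show (a • y + (1 - a) • y, a * T + (1 - a) * co y) = (y, co y + s)
        refine Prod.ext ?_ ?_
        · show a • y + (1 - a) • y = y
          rw [← add_smul]
          simp
        · show a * T + (1 - a) * co y = co y + s
          nlinarith [haT]
      exact hcombo hmem
  have hq : (p, co p) ∉ interior epi := by
    intro h
    rw [mem_interior_iff_mem_nhds, Metric.mem_nhds_iff] at h
    obtain ⟨ε, hε, hball⟩ := h
    have hmem : ((p, co p - ε / 2) : Eucl n × ℝ) ∈ Metric.ball (p, co p) ε := by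
      rw [Metric.mem_ball]
      have : dist ((p, co p - ε / 2) : Eucl n × ℝ) (p, co p) = ε / 2 := by
        rw [Prod.dist_eq]
        simp [Real.dist_eq, abs_of_nonneg hε.le, abs_of_nonpos]
        linarith
      rw [this]; linarith
    have := hball hmem
    simp only [hepi, mem_setOf_eq] at this
    linarith
  obtain ⟨F, hF⟩ := geometric_hahn_banach_open_point hepiConv.interior isOpen_interior hq
  set c := F ((0 : Eucl n), (1 : ℝ)) with hc
  have hsplit : ∀ (y : Eucl n) (t : ℝ), F (y, t) = F (y, 0) + t * c := by
    intro y t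
    have h1 : ((y, t) : Eucl n × ℝ) = (y, 0) + t • ((0 : Eucl n), (1 : ℝ)) := by
      rw [Prod.smul_mk]
      simp
    rw [h1, map_add, map_smul, smul_eq_mul, hc]
  have hcneg : c < 0 := by
    have h1 := hF _ (hkey p 1 one_pos)
    rw [hsplit p (co p + 1), hsplit p (co p)] at h1
    nlinarith
  have hineq : ∀ y, F (y, 0) + co y * c ≤ F (p, 0) + co p * c := by
    intro y
    by_contra hcon
    push_neg at hcon
    have hc0 : c ≠ 0 := ne_of_lt hcneg
    set s := (F (y, 0) + co y * c - (F (p, 0) + co p * c)) / (2 * (-c)) with hs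
    have hs0 : 0 < s := div_pos (by linarith) (by linarith)
    have h1 := hF _ (hkey y s hs0)
    rw [hsplit y (co y + s), hsplit p (co p)] at h1
    have h2 : s * c = -((F (y, 0) + co y * c - (F (p, 0) + co p * c)) / 2) := by
      rw [hs]
      field_simp
    nlinarith
  have hcinv : 0 < -c := by linarith
  refine ⟨mkAff ((-c)⁻¹ • (F.toLinearMap.comp (LinearMap.inl ℝ (Eucl n) ℝ)))
    (co p - (-c)⁻¹ * F (p, 0)), ?_, ?_⟩
  · intro y
    have happ : (mkAff ((-c)⁻¹ • (F.toLinearMap.comp (LinearMap.inl ℝ (Eucl n) ℝ)))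
        (co p - (-c)⁻¹ * F (p, 0))) y = (-c)⁻¹ * F (y, 0) + (co p - (-c)⁻¹ * F (p, 0)) := by
      simp [mkAff_apply, LinearMap.smul_apply, LinearMap.comp_apply, LinearMap.inl_apply,
        smul_eq_mul]
    rw [happ]
    have h1 := hineq y
    have key : (F (y, 0) - F (p, 0)) / (-c) ≤ co y - co p := by
      rw [div_le_iff₀ hcinv]
      nlinarith
    have hrw : ∀ X : ℝ, (-c)⁻¹ * X = X / (-c) := fun X => by rw [inv_mul_eq_div]
    have h3 : (-c)⁻¹ * F (y, 0) + (co p - (-c)⁻¹ * F (p, 0)) ≤ co y := by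
      rw [hrw, hrw]
      have : (F (y, 0)) / (-c) - (F (p, 0)) / (-c) = (F (y, 0) - F (p, 0)) / (-c) := by
        rw [div_sub_div_same]
      linarith
    have h4 : co y ≤ f y + lam * ‖y‖ ^ 2 := by
      rw [hco, convEnv_f_eq]
      obtain ⟨ℓ₀, hm₀⟩ := envSet_nonempty hf hlam y
      refine csSup_le ⟨ℓ₀ y, ℓ₀, hm₀, rfl⟩ ?_
      rintro a ⟨ℓ, hm, rfl⟩
      exact hm y
    linarith
  · simp only [mkAff_apply, LinearMap.smul_apply, LinearMap.coe_comp, Function.comp_apply,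
      ContinuousLinearMap.coe_coe, LinearMap.inl_apply, smul_eq_mul]
    ring

end Support

section Carath

lemma sum_pad {β : Type*} [AddCommMonoid β] (k m : ℕ) (hk : k ≤ m) (F : Fin k → β) :
    (∑ i : Fin m, if h : (i : ℕ) < k then F ⟨i, h⟩ else 0) = ∑ j : Fin k, F j := by
  set F' : ℕ → β := fun i => if h : i < k then F ⟨i, h⟩ else 0 with hF'
  have h1 : (∑ i : Fin m, if h : (i : ℕ) < k then F ⟨i, h⟩ else 0) =
      ∑ i ∈ Finset.range m, F' i := Fin.sum_univ_eq_sum_range F' m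
  have h2 : ∑ i ∈ Finset.range k, F' i = ∑ i ∈ Finset.range m, F' i := by
    refine Finset.sum_subset (Finset.range_subset_range.2 hk) ?_
    intro x _ hnx
    simp only [Finset.mem_range, not_lt] at hnx
    simp only [hF']
    rw [dif_neg (by omega)]
  have h3 : (∑ j : Fin k, F j) = ∑ i ∈ Finset.range k, F' i := by
    rw [← Fin.sum_univ_eq_sum_range F' k]
    refine Finset.sum_congr rfl fun j _ => ?_
    simp only [hF']
    rw [dif_pos j.isLt]
  rw [h1, ← h2, h3]

lemma carath_fix {n : ℕ} (s : Set (Eucl n)) (x : Eucl n) (hx : x ∈ convexHull ℝ s) :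
    ∃ (w : Fin (n + 1) → ℝ) (z : Fin (n + 1) → Eucl n),
      (∀ i, 0 ≤ w i) ∧ ∑ i, w i = 1 ∧ (∀ i, z i ∈ s) ∧ ∑ i, w i • z i = x := by
  rw [convexHull_eq_union] at hx
  simp only [mem_iUnion] at hx
  obtain ⟨t, hts, hai, hxt⟩ := hx
  have hcard : t.card ≤ n + 1 := by
    have h1 := hai.card_le_finrank_succ
    have h2 : Module.finrank ℝ ↥(vectorSpan ℝ (Set.range ((↑) : t → Eucl n))) ≤
        Module.finrank ℝ (Eucl n) := Submodule.finrank_le _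
    rw [Fintype.card_coe] at h1
    have h3 : Module.finrank ℝ (Eucl n) = n := finrank_euclideanSpace_fin
    omega
  have hne : t.Nonempty := by
    rcases Finset.eq_empty_or_nonempty t with h | h
    · subst h
      simp at hxt
    · exact h
  rw [Finset.convexHull_eq] at hxt
  obtain ⟨w₀, hw0, hw1, hwx⟩ := hxt
  rw [Finset.centerMass_eq_of_sum_1 _ _ hw1] at hwx
  set k := t.card with hk
  have hk0 : 0 < k := Finset.card_pos.2 hne
  set e := t.equivFin with he
  refine ⟨(fun i => if h : (i : ℕ) < k then w₀ ((e.symm ⟨i, h⟩ : t) : Eucl n) else 0),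
    (fun i => if h : (i : ℕ) < k then ((e.symm ⟨i, h⟩ : t) : Eucl n)
      else ((e.symm ⟨0, hk0⟩ : t) : Eucl n)), ?_, ?_, ?_, ?_⟩
  · intro i
    dsimp only
    split
    · exact hw0 _ (Finset.coe_mem _)
    · exact le_refl 0
  · rw [sum_pad k (n + 1) (by omega) (fun j => w₀ ((e.symm j : t) : Eucl n))]
    rw [Equiv.sum_comp e.symm (fun a : t => w₀ (a : Eucl n))]
    rw [Finset.sum_coe_sort t (fun y => w₀ y)]
    exact hw1
  · intro i
    dsimp only
    split
    · exact hts (Finset.coe_mem _)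
    · exact hts (Finset.coe_mem _)
  · have hterm : ∀ i : Fin (n + 1),
        (if h : (i : ℕ) < k then w₀ ((e.symm ⟨i, h⟩ : t) : Eucl n) else 0) •
          (if h : (i : ℕ) < k then ((e.symm ⟨i, h⟩ : t) : Eucl n)
            else ((e.symm ⟨0, hk0⟩ : t) : Eucl n)) =
        (if h : (i : ℕ) < k then w₀ ((e.symm ⟨i, h⟩ : t) : Eucl n) •
          ((e.symm ⟨i, h⟩ : t) : Eucl n) else 0) := by
      intro i
      by_cases h : (i : ℕ) < k
      · rw [dif_pos h, dif_pos h, dif_pos h]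
      · rw [dif_neg h, dif_neg h, dif_neg h, zero_smul]
    rw [Finset.sum_congr rfl fun i _ => hterm i]
    rw [sum_pad k (n + 1) (by omega)
      (fun j => w₀ ((e.symm j : t) : Eucl n) • ((e.symm j : t) : Eucl n))]
    rw [Equiv.sum_comp e.symm (fun a : t => w₀ (a : Eucl n) • (a : Eucl n))]
    rw [Finset.sum_coe_sort t (fun y => w₀ y • y)]
    simpa using hwx

lemma isCompact_hull {n : ℕ} {K : Set (Eucl n)} (hK : IsCompact K) :
    IsCompact (convexHull ℝ K) := by
  rcases K.eq_empty_or_nonempty with h | hne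
  · subst h
    rw [convexHull_empty]
    exact isCompact_empty
  have himg : convexHull ℝ K =
      (fun p : (Fin (n + 1) → ℝ) × (Fin (n + 1) → Eucl n) => ∑ i, p.1 i • p.2 i) ''
        ((stdSimplex ℝ (Fin (n + 1))) ×ˢ (Set.univ.pi fun _ => K)) := by
    apply Subset.antisymm
    · intro x hx
      obtain ⟨w, z, hw0, hw1, hzs, hsum⟩ := carath_fix K x hx
      exact ⟨(w, z), ⟨⟨hw0, hw1⟩, fun i _ => hzs i⟩, hsum⟩
    · rintro x ⟨⟨w, z⟩, ⟨⟨hw0, hw1⟩, hz⟩, rfl⟩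
      exact (convex_convexHull ℝ K).sum_mem (fun i _ => hw0 i) hw1
        (fun i _ => subset_convexHull ℝ K (hz i (mem_univ i)))
  rw [himg]
  refine ((isCompact_stdSimplex ℝ (Fin (n + 1))).prod (isCompact_univ_pi fun _ => hK)).image ?_
  exact continuous_finset_sum _ fun i _ =>
    ((continuous_apply i).comp continuous_fst).smul ((continuous_apply i).comp continuous_snd)

lemma lsc_pos_lb {n : ℕ} {K : Set (Eucl n)} (hK : IsCompact K) {G : Eucl n → ℝ}
    (hG : LowerSemicontinuous G) (hpos : ∀ y ∈ K, 0 < G y) :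
    ∃ m : ℝ, 0 < m ∧ ∀ y ∈ K, m ≤ G y := by
  have hcover : K ⊆ ⋃ j : ℕ, G ⁻¹' Ioi (1 / ((j : ℝ) + 1)) := by
    intro y hy
    obtain ⟨j, hj⟩ := exists_nat_one_div_lt (hpos y hy)
    exact mem_iUnion.2 ⟨j, by simpa using hj⟩
  obtain ⟨T, hT⟩ := hK.elim_finite_subcover _ (fun j : ℕ => hG.isOpen_preimage _) hcover
  set N := T.sup id with hN
  refine ⟨1 / ((N : ℝ) + 1), by positivity, ?_⟩
  intro y hy
  have := hT hy
  simp only [mem_iUnion, mem_preimage, mem_Ioi] at this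
  obtain ⟨j, hjT, hj⟩ := this
  have hjN : j ≤ N := Finset.le_sup (f := id) hjT
  have h2 : (1 : ℝ) / ((N : ℝ) + 1) ≤ 1 / ((j : ℝ) + 1) := by
    apply one_div_le_one_div_of_le (by positivity)
    have : (j : ℝ) ≤ (N : ℝ) := by exact_mod_cast hjN
    linarith
  linarith

end Carath

section Contact

variable {n : ℕ} {f : Eucl n → ℝ} {M lam : ℝ}

set_option maxHeartbeats 1000000 in
lemma mem_hull_contact (hf : ∀ x, |f x| ≤ M) (hM : 0 < M) (hlam : 0 < lam)
    (p : Eucl n) {ℓ : Eucl n →ᵃ[ℝ] ℝ} (hm : ∀ y, ℓ y ≤ f y + lam * ‖y‖ ^ 2)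
    (hsup : ℓ p = convEnv (fun y => f y + lam * ‖y‖ ^ 2) p) :
    ∃ K : Set (Eucl n), p ∈ convexHull ℝ K ∧
      ∀ y ∈ K, lowerT lam f y = lscEnv f y ∧ ‖y - p‖ ≤ 2 * Real.sqrt (2 * M / lam) := by
  set co := convEnv (fun y => f y + lam * ‖y‖ ^ 2) with hco
  have hm' : ∀ y, ℓ y ≤ lscEnv f y + lam * ‖y‖ ^ 2 := (minorant_iff hf ℓ).1 hm
  set a : Eucl n :=
    (InnerProductSpace.toDual ℝ (Eucl n)).symm (LinearMap.toContinuousLinearMap ℓ.linear) with ha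
  have hay : ∀ y, ℓ.linear y = (inner ℝ a y : ℝ) := by
    intro y
    rw [ha, InnerProductSpace.toDual_symm_apply]
    simp
  set cc : Eucl n := ((2 * lam)⁻¹) • a with hcc
  have hac : a = (2 * lam) • cc := by
    rw [hcc, smul_smul, mul_inv_cancel₀ (by positivity), one_smul]
  set kk := lam * ‖cc‖ ^ 2 + ℓ 0 with hkk
  have hdec : ∀ y, ℓ y = ℓ.linear y + ℓ 0 := fun y => by
    simpa using ℓ.map_vadd (0 : Eucl n) y
  have hidg : ∀ y, ℓ y = lam * ‖y‖ ^ 2 - lam * ‖y - cc‖ ^ 2 + kk := by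
    intro y
    have h1 : ℓ y = (inner ℝ a y : ℝ) + ℓ 0 := by rw [← hay]; exact hdec y
    have h2 : (inner ℝ a y : ℝ) = 2 * lam * (inner ℝ cc y : ℝ) := by
      rw [hac, real_inner_smul_left]
    have h3 : ‖y - cc‖ ^ 2 = ‖y‖ ^ 2 - 2 * (inner ℝ y cc : ℝ) + ‖cc‖ ^ 2 := norm_sub_sq_real y cc
    have h4 : (inner ℝ y cc : ℝ) = (inner ℝ cc y : ℝ) := real_inner_comm cc y
    rw [h1, h2, hkk, h3, h4]; ring
  have hk_le : kk ≤ M := by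
    have h1 := hm' cc
    have h2 := hidg cc
    have h4 := lscEnv_le_M hf cc
    have h5 : ‖cc - cc‖ ^ 2 = 0 := by simp
    rw [h5] at h2
    rw [h2] at h1
    linarith
  set G : Eucl n → ℝ := fun y => lscEnv f y + (lam * ‖y‖ ^ 2 - ℓ y) with hG
  have hGnonneg : ∀ y, 0 ≤ G y := fun y => by have := hm' y; simp only [hG]; linarith
  set K : Set (Eucl n) := {y | G y ≤ 0} with hK
  have hcontact : ∀ y ∈ K, lowerT lam f y = lscEnv f y := by
    intro y hy
    simp only [hK, hG, mem_setOf_eq] at hy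
    have h1 : co y ≤ lscEnv f y + lam * ‖y‖ ^ 2 := convEnv_le hf hlam y
    have h2 : ℓ y ≤ co y := le_convEnv'_s3 hm y
    simp only [lowerT, ← hco]
    linarith
  have hKrad : ∀ y ∈ K, lam * ‖y - cc‖ ^ 2 ≤ 2 * M := by
    intro y hy
    simp only [hK, hG, mem_setOf_eq] at hy
    have h1 := hidg y
    have h2 := neg_M_le_lscEnv hf y
    linarith
  have hprad : lam * ‖p - cc‖ ^ 2 ≤ 2 * M := by
    have h1 : lam * ‖p‖ ^ 2 - M ≤ co p := paraboloid_le_convEnv hf hlam p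
    have h2 := hidg p
    rw [hsup] at h2
    linarith
  have hdist : ∀ y : Eucl n, lam * ‖y - cc‖ ^ 2 ≤ 2 * M →
      ‖y - cc‖ ≤ Real.sqrt (2 * M / lam) := by
    intro y hy
    have h1 : ‖y - cc‖ ^ 2 ≤ 2 * M / lam := by rw [le_div_iff₀ hlam]; linarith
    have h2 := Real.sqrt_nonneg (2 * M / lam)
    have h3 : Real.sqrt (2 * M / lam) ^ 2 = 2 * M / lam := Real.sq_sqrt (by positivity)
    nlinarith [norm_nonneg (y - cc)]
  have hGlsc : LowerSemicontinuous G := by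
    have h1 : LowerSemicontinuous (lscEnv f) := lsc_lscEnv hf
    have h2 : Continuous fun y : Eucl n => lam * ‖y‖ ^ 2 - ℓ y :=
      (continuous_const.mul (continuous_norm.pow 2)).sub (aff_continuous ℓ)
    exact h1.add h2.lowerSemicontinuous
  have hKclosed : IsClosed K := by
    have hKeq : K = (G ⁻¹' Ioi 0)ᶜ := by
      ext y; simp [hK, not_lt]
    rw [hKeq]
    exact (hGlsc.isOpen_preimage 0).isClosed_compl
  have hKsub : K ⊆ closedBall cc (Real.sqrt (2 * M / lam)) := by
    intro y hy
    rw [mem_closedBall, dist_eq_norm]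
    exact hdist y (hKrad y hy)
  have hKcpt : IsCompact K :=
    (isCompact_closedBall cc (Real.sqrt (2 * M / lam))).of_isClosed_subset hKclosed hKsub
  refine ⟨K, ?_, fun y hy => ⟨hcontact y hy, ?_⟩⟩
  swap
  · have h1 : ‖y - p‖ ≤ ‖y - cc‖ + ‖cc - p‖ := by
      have : y - p = (y - cc) + (cc - p) := by abel
      rw [this]; exact norm_add_le _ _
    have h2 : ‖cc - p‖ = ‖p - cc‖ := norm_sub_rev cc p
    have h3 := hdist y (hKrad y hy)
    have h4 := hdist p hprad
    linarith
  by_contra hcon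
  have hCconv : Convex ℝ (convexHull ℝ K) := convex_convexHull ℝ K
  have hCclosed : IsClosed (convexHull ℝ K) := (isCompact_hull hKcpt).isClosed
  obtain ⟨F, u, hFu, hup⟩ := geometric_hahn_banach_closed_point hCconv hCclosed hcon
  set r₀ := Real.sqrt (4 * M / lam) with hr₀
  have hr₀pos : 0 < r₀ := Real.sqrt_pos.2 (by positivity)
  have hr₀sq : r₀ ^ 2 = 4 * M / lam := Real.sq_sqrt (by positivity)
  set Q := {y : Eucl n | u ≤ F y} ∩ closedBall cc r₀ with hQ
  have hQcpt : IsCompact Q :=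
    (isCompact_closedBall cc r₀).inter_left (isClosed_le continuous_const F.continuous)
  have hQpos : ∀ y ∈ Q, 0 < G y := by
    intro y hy
    rcases (hGnonneg y).lt_or_eq with h | h
    · exact h
    · exfalso
      have hyK : y ∈ K := by simp only [hK, mem_setOf_eq]; linarith
      have := hFu y (subset_convexHull ℝ K hyK)
      exact absurd hy.1 (not_le.2 this)
  obtain ⟨m, hm0, hmlb⟩ := lsc_pos_lb hQcpt hGlsc hQpos
  set B := ‖F‖ * (‖cc‖ + r₀) + |u| + 1 with hB
  have hBpos : 0 < B := by positivity
  have hFbound : ∀ y : Eucl n, F y ≤ ‖F‖ * ‖y‖ := fun y =>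
    le_trans (le_abs_self _) (by simpa [Real.norm_eq_abs] using F.le_opNorm y)
  set t := min (m / B) (min ((lam * r₀ / 4) / (‖F‖ + 1))
    ((lam * r₀ ^ 2 / 4) / (‖F‖ * ‖cc‖ + |u| + 1))) with ht
  have hFnn : (0:ℝ) ≤ ‖F‖ := norm_nonneg _
  have ht0 : 0 < t := lt_min (div_pos hm0 hBpos) (lt_min (by positivity) (by positivity))
  have hmin' : ∀ y, ℓ y + t * (F y - u) ≤ lscEnv f y + lam * ‖y‖ ^ 2 := by
    intro y
    rcases le_or_gt (F y) u with hy1 | hy2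
    · have h1 : t * (F y - u) ≤ 0 := mul_nonpos_of_nonneg_of_nonpos ht0.le (by linarith)
      linarith [hm' y]
    · by_cases hy3 : y ∈ closedBall cc r₀
      · have hyQ : y ∈ Q := ⟨hy2.le, hy3⟩
        have h1 := hmlb y hyQ
        have hyb : ‖y‖ ≤ ‖cc‖ + r₀ := by
          have hd : ‖y - cc‖ ≤ r₀ := by rw [← dist_eq_norm]; exact mem_closedBall.1 hy3
          have : ‖y‖ ≤ ‖cc‖ + ‖y - cc‖ := by
            have : y = cc + (y - cc) := by abel
            nth_rewrite 1 [this]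
            exact norm_add_le _ _
          linarith
        have h2 : F y - u ≤ B := by
          have := hFbound y
          nlinarith [le_abs_self u, neg_abs_le u]
        have h4 : t ≤ m / B := min_le_left _ _
        have h5 : t * (F y - u) ≤ (m / B) * B :=
          mul_le_mul h4 h2 (by linarith) (le_of_lt (div_pos hm0 hBpos))
        rw [div_mul_cancel₀ _ (ne_of_gt hBpos)] at h5
        simp only [hG] at h1
        linarith
      · have hrr : r₀ < ‖y - cc‖ := by
          rw [mem_closedBall, not_le, dist_eq_norm] at hy3
          exact hy3
        set r := ‖y - cc‖ with hr
        have hrpos : 0 < r := lt_trans hr₀pos hrr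
        have hid := hidg y
        have hlsc := neg_M_le_lscEnv hf y
        have hyb : ‖y‖ ≤ r + ‖cc‖ := by
          have : y = (y - cc) + cc := by abel
          nth_rewrite 1 [this]
          exact norm_add_le _ _
        have h2 : F y - u ≤ ‖F‖ * (r + ‖cc‖) + |u| := by
          have := hFbound y
          nlinarith [le_abs_self u, neg_abs_le u]
        have ht1 : t * (‖F‖ + 1) ≤ lam * r₀ / 4 := by
          have htle : t ≤ (lam * r₀ / 4) / (‖F‖ + 1) :=
            le_trans (min_le_right _ _) (min_le_left _ _)
          rw [le_div_iff₀ (by positivity)] at htle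
          linarith
        have ht2 : t * (‖F‖ * ‖cc‖ + |u| + 1) ≤ lam * r₀ ^ 2 / 4 := by
          have htle : t ≤ (lam * r₀ ^ 2 / 4) / (‖F‖ * ‖cc‖ + |u| + 1) :=
            le_trans (min_le_right _ _) (min_le_right _ _)
          rw [le_div_iff₀ (by positivity)] at htle
          linarith
        -- t * (F y - u) ≤ lam * r^2 / 2 ≤ lam * r^2 - 2 M and
        -- lscEnv f y + lam ‖y‖² - ℓ y = lscEnv f y + lam r² - kk ≥ lam r² - 2M
        have hsq : r₀ ^ 2 ≤ r ^ 2 := by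
          have := pow_le_pow_left₀ hr₀pos.le hrr.le 2
          linarith
        have key : t * (F y - u) ≤ lam * r ^ 2 / 2 := by
          have e1 : t * (F y - u) ≤ t * (‖F‖ * (r + ‖cc‖) + |u|) :=
            mul_le_mul_of_nonneg_left h2 ht0.le
          have e2 : t * (‖F‖ * (r + ‖cc‖) + |u|) =
              (t * (‖F‖ + 1)) * r + t * (‖F‖ * ‖cc‖ + |u| + 1) - t * r - t := by ring
          have e3 : (t * (‖F‖ + 1)) * r ≤ (lam * r₀ / 4) * r :=
            mul_le_mul_of_nonneg_right ht1 hrpos.le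
          have e4a : lam * r₀ ≤ lam * r := mul_le_mul_of_nonneg_left hrr.le hlam.le
          have e4 : (lam * r₀ / 4) * r ≤ (lam * r / 4) * r :=
            mul_le_mul_of_nonneg_right (by linarith) hrpos.le
          have e4b : (lam * r / 4) * r = lam * r ^ 2 / 4 := by ring
          have e5a : lam * r₀ ^ 2 ≤ lam * r ^ 2 := mul_le_mul_of_nonneg_left hsq hlam.le
          have e6 : 0 ≤ t * r := mul_nonneg ht0.le hrpos.le
          linarith
        have hfar : lam * r ^ 2 / 2 ≤ lam * r ^ 2 - 2 * M := by
          have h4M : lam * r₀ ^ 2 = 4 * M := by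
            rw [hr₀sq]
            field_simp
          have e5a : lam * r₀ ^ 2 ≤ lam * r ^ 2 := mul_le_mul_of_nonneg_left hsq hlam.le
          linarith
        have hGy : lam * r ^ 2 - 2 * M ≤ lscEnv f y + lam * ‖y‖ ^ 2 - ℓ y := by
          rw [hid]
          simp only [← hr]
          linarith [hk_le]
        linarith
  set ℓ' := mkAff (ℓ.linear + t • (F.toLinearMap)) (ℓ 0 + t * (-u)) with hℓ'
  have hℓ'app : ∀ y, ℓ' y = ℓ y + t * (F y - u) := by
    intro y
    simp only [hℓ', mkAff_apply, LinearMap.add_apply, LinearMap.smul_apply,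
      ContinuousLinearMap.coe_coe, smul_eq_mul]
    rw [hdec y]
    ring
  have h1 : ℓ' p ≤ co p := by
    rw [hco]
    refine le_convEnv hf (fun y => by rw [hℓ'app]; exact hmin' y) p
  rw [hℓ'app p, hsup] at h1
  have := mul_pos ht0 (sub_pos.2 hup)
  linarith

end Contact

section Main

lemma segment_split {n : ℕ} {S : Set (Eucl n)} {x₀ p : Eucl n} (hp : p ≠ x₀)
    (h : p ∈ convexHull ℝ (insert x₀ S)) :
    ∃ (α : ℝ) (z : Eucl n), 0 ≤ α ∧ α < 1 ∧ z ∈ convexHull ℝ S ∧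
      p = α • x₀ + (1 - α) • z := by
  rcases S.eq_empty_or_nonempty with hS | hS
  · subst hS
    simp only [insert_empty_eq, convexHull_singleton, mem_singleton_iff] at h
    exact absurd h hp
  rw [convexHull_insert hS, mem_convexJoin] at h
  obtain ⟨a, ha, z, hz, hseg⟩ := h
  rw [mem_singleton_iff] at ha
  subst ha
  obtain ⟨α, β, hα, hβ, hab, hp'⟩ := hseg
  have hα1 : α < 1 := by
    rcases lt_or_eq_of_le (by linarith : α ≤ 1) with h | h
    · exact h
    · exfalso
      have hβ0 : β = 0 := by linarith
      rw [h, hβ0] at hp'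
      simp only [one_smul, zero_smul, add_zero] at hp'
      exact hp hp'.symm
  refine ⟨α, z, hα, hα1, hz, ?_⟩
  rw [show (1 : ℝ) - α = β by linarith]
  exact hp'.symm

end Main

/-- Density theorem for the lower compensated convex transform. -/
theorem lowerT_density (n : ℕ) (hn : 1 ≤ n)
    (f : EuclideanSpace ℝ (Fin n) → ℝ) (M : ℝ) (hM : 0 < M) (hf : ∀ x, |f x| ≤ M)
    (lam : ℝ) (hlam : 0 < lam) (x₀ : EuclideanSpace ℝ (Fin n)) :
    ∃ (xs : Fin (n + 1) → EuclideanSpace ℝ (Fin n)) (c : Fin (n + 1) → ℝ),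
      (∀ i, xs i ∈ Metric.closedBall x₀ ((2 + Real.sqrt 2) * Real.sqrt (M / lam))) ∧
      (∀ i, xs i ≠ x₀) ∧ (∀ i, 0 ≤ c i) ∧
      (∑ i, c i) = 1 ∧ (∑ i, c i • xs i) = x₀ ∧
      ∀ i, lowerT lam f (xs i) = lscEnv f (xs i) := by
  set D := Real.sqrt (M / lam) with hD
  have hD0 : 0 < D := Real.sqrt_pos.2 (by positivity)
  set R := (2 + Real.sqrt 2) * D with hR
  have hsqrt2 : Real.sqrt 2 ≤ 3 / 2 := by
    nlinarith [Real.sq_sqrt (show (0:ℝ) ≤ 2 by norm_num), Real.sqrt_nonneg 2]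
  have hsqrt2' : (0:ℝ) ≤ Real.sqrt 2 := Real.sqrt_nonneg 2
  have h2M : Real.sqrt (2 * M / lam) = Real.sqrt 2 * D := by
    rw [hD, ← Real.sqrt_mul (by norm_num : (0:ℝ) ≤ 2) (M / lam), mul_div_assoc]
  set S : Set (Eucl n) := {y | y ≠ x₀ ∧ y ∈ closedBall x₀ R ∧ lowerT lam f y = lscEnv f y}
    with hS
  have hpt : ∀ p : Eucl n, ‖p - x₀‖ = D / 2 → ∃ (α : ℝ) (z : Eucl n), 0 ≤ α ∧ α < 1 ∧
      z ∈ convexHull ℝ S ∧ p = α • x₀ + (1 - α) • z := by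
    intro p hpd
    obtain ⟨ℓ, hmℓ, hsupℓ⟩ := exists_support hf hlam p
    obtain ⟨K, hpK, hKprop⟩ := mem_hull_contact hf hM hlam p hmℓ hsupℓ
    have hKsub : K ⊆ insert x₀ S := by
      intro y hy
      obtain ⟨hy1, hy2⟩ := hKprop y hy
      by_cases hyx : y = x₀
      · exact mem_insert_iff.2 (Or.inl hyx)
      · refine mem_insert_iff.2 (Or.inr ⟨hyx, ?_, hy1⟩)
        rw [mem_closedBall, dist_eq_norm, hR]
        have h1 : ‖y - x₀‖ ≤ ‖y - p‖ + ‖p - x₀‖ := by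
          have hyd : y - x₀ = (y - p) + (p - x₀) := by abel
          rw [hyd]; exact norm_add_le _ _
        rw [h2M] at hy2
        calc ‖y - x₀‖ ≤ ‖y - p‖ + ‖p - x₀‖ := h1
          _ ≤ 2 * (Real.sqrt 2 * D) + D / 2 := by rw [hpd]; linarith
          _ ≤ (2 + Real.sqrt 2) * D := by nlinarith
    have hp0 : p ≠ x₀ := by
      intro h
      rw [h] at hpd
      simp only [sub_self, norm_zero] at hpd
      linarith
    exact segment_split hp0 ((convexHull_mono hKsub) hpK)
  set i0 : Fin n := ⟨0, hn⟩ with hi0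
  set e : Eucl n := EuclideanSpace.single i0 (1 : ℝ) with he
  have hne : ‖e‖ = 1 := by rw [he, EuclideanSpace.norm_single]; norm_num
  set x' := x₀ + (D / 2) • e with hx'
  set x'' := x₀ - (D / 2) • e with hx''
  have hx'd : ‖x' - x₀‖ = D / 2 := by
    have h1 : x' - x₀ = (D / 2) • e := by rw [hx']; abel
    rw [h1, norm_smul, hne, mul_one, Real.norm_eq_abs, abs_of_pos (by linarith)]
  have hx''d : ‖x'' - x₀‖ = D / 2 := by
    have h1 : x'' - x₀ = -((D / 2) • e) := by rw [hx'']; abel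
    rw [h1, norm_neg, norm_smul, hne, mul_one, Real.norm_eq_abs, abs_of_pos (by linarith)]
  obtain ⟨α, z, hα0, hα1, hz, hzp⟩ := hpt x' hx'd
  obtain ⟨β, w, hβ0, hβ1, hw, hwp⟩ := hpt x'' hx''d
  have h2x : α • x₀ + (1 - α) • z + (β • x₀ + (1 - β) • w) = (2 : ℝ) • x₀ := by
    rw [← hzp, ← hwp, hx', hx'']
    module
  have hsum : (2 - α - β) • x₀ = (1 - α) • z + (1 - β) • w := by
    have h3 : (2 : ℝ) • x₀ - α • x₀ - β • x₀ = (1 - α) • z + (1 - β) • w := by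
      rw [← h2x]; abel
    rw [← h3]; module
  set s := 2 - α - β with hs
  have hs0 : 0 < s := by rw [hs]; linarith
  have hx₀eq : x₀ = (s⁻¹ * (1 - α)) • z + (s⁻¹ * (1 - β)) • w := by
    have h1 : x₀ = s⁻¹ • ((1 - α) • z + (1 - β) • w) := by
      rw [← hsum, smul_smul, inv_mul_cancel₀ (ne_of_gt hs0), one_smul]
    rw [h1, smul_add, smul_smul, smul_smul]
  have hx₀S : x₀ ∈ convexHull ℝ S := by
    have hca : 0 ≤ s⁻¹ * (1 - α) := mul_nonneg (inv_nonneg.2 hs0.le) (by linarith)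
    have hcb : 0 ≤ s⁻¹ * (1 - β) := mul_nonneg (inv_nonneg.2 hs0.le) (by linarith)
    have hcab : s⁻¹ * (1 - α) + s⁻¹ * (1 - β) = 1 := by
      have hsne : s ≠ 0 := ne_of_gt hs0
      field_simp
      rw [hs]; ring
    rw [hx₀eq]
    exact (convex_convexHull ℝ S) hz hw hca hcb hcab
  obtain ⟨wgt, pts, hw0, hw1, hpts, hsumx⟩ := carath_fix S x₀ hx₀S
  exact ⟨pts, wgt, fun i => (hpts i).2.1, fun i => (hpts i).1, hw0, hw1, hsumx,
    fun i => (hpts i).2.2⟩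
end

section
/- (Expansion Theorem) Let n ≥ 1, let E ⊂ ℝⁿ be a non-empty set and let λ > 0. Then the upper compensated convex transform of the characteristic function χ_E satisfies: C^u_λ(χ_E)(x) = 1 if x ∈ Ē (the closure of E); C^u_λ(χ_E)(x) = 0 if dist(x, Ē) ≥ 1/√λ; and 0 < C^u_λ(χ_E)(x) < 1 if x ∉ Ē and dist(x, E) < 1/√λ. -/
/-- Upper compensated convex transform. -/
noncomputable def upperT {n : ℕ} (lam : ℝ) (f : EuclideanSpace ℝ (Fin n) → ℝ)
    (x : EuclideanSpace ℝ (Fin n)) : ℝ :=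
  lam * ‖x‖ ^ 2 - convEnv (fun y => lam * ‖y‖ ^ 2 - f y) x

/-- Characteristic function of a set: `χ_E(x) = 1` if `x ∈ E`, `0` otherwise. -/
noncomputable def chi {n : ℕ} (E : Set (EuclideanSpace ℝ (Fin n)))
    (x : EuclideanSpace ℝ (Fin n)) : ℝ :=
  E.indicator (fun _ => (1 : ℝ)) x

open Metric

lemma chi_nonneg {n : ℕ} (E : Set (EuclideanSpace ℝ (Fin n))) (x) : 0 ≤ chi E x :=
  Set.indicator_nonneg (fun _ _ => zero_le_one) x

lemma chi_le_one {n : ℕ} (E : Set (EuclideanSpace ℝ (Fin n))) (x) : chi E x ≤ 1 := by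
  unfold chi; by_cases h : x ∈ E <;> simp [h]

lemma chi_of_mem {n : ℕ} {E : Set (EuclideanSpace ℝ (Fin n))} {x} (h : x ∈ E) : chi E x = 1 := by
  simp [chi, h]

lemma chi_of_not_mem {n : ℕ} {E : Set (EuclideanSpace ℝ (Fin n))} {x} (h : x ∉ E) :
    chi E x = 0 := by simp [chi, h]

/-- The affine map `y ↦ 2λ⟪c,y⟫ − λ‖c‖² − s = λ‖y‖² − λ‖y−c‖² − s`. -/
noncomputable def aff {n : ℕ} (lam : ℝ) (c : EuclideanSpace ℝ (Fin n)) (s : ℝ) :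
    EuclideanSpace ℝ (Fin n) →ᵃ[ℝ] ℝ :=
  { toFun := fun y => 2 * lam * (inner ℝ c y : ℝ) - lam * ‖c‖ ^ 2 - s
    linear := (2 * lam) • (innerSL ℝ c).toLinearMap
    map_vadd' := by
      intro p v
      simp only [vadd_eq_add, inner_add_right, LinearMap.smul_apply,
        ContinuousLinearMap.coe_coe, innerSL_apply_apply, smul_eq_mul]
      ring }

lemma aff_apply {n : ℕ} (lam : ℝ) (c : EuclideanSpace ℝ (Fin n)) (s : ℝ) (y) :
    aff lam c s y = lam * ‖y‖ ^ 2 - lam * ‖y - c‖ ^ 2 - s := by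
  have h : ‖y - c‖ ^ 2 = ‖y‖ ^ 2 - 2 * (inner ℝ y c : ℝ) + ‖c‖ ^ 2 := norm_sub_sq_real y c
  have hsym : (inner ℝ y c : ℝ) = (inner ℝ c y : ℝ) := (real_inner_comm c y)
  show 2 * lam * (inner ℝ c y : ℝ) - lam * ‖c‖ ^ 2 - s = _
  rw [h, ← hsym]; ring

lemma aff_minorant {n : ℕ} {lam s : ℝ} {E : Set (EuclideanSpace ℝ (Fin n))}
    {c : EuclideanSpace ℝ (Fin n)} (hlam : 0 < lam) (hs : 0 ≤ s)
    (hEc : ∀ y ∈ E, 1 ≤ lam * ‖y - c‖ ^ 2 + s) :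
    ∀ y, aff lam c s y ≤ lam * ‖y‖ ^ 2 - chi E y := by
  intro y
  rw [aff_apply]
  by_cases hy : y ∈ E
  · rw [chi_of_mem hy]; have := hEc y hy; linarith
  · rw [chi_of_not_mem hy]
    have h1 : 0 ≤ lam * ‖y - c‖ ^ 2 := by positivity
    linarith

/-- The set defining the convex envelope of `λ‖·‖² − χ_E` at `x`. -/
def Sset {n : ℕ} (lam : ℝ) (E : Set (EuclideanSpace ℝ (Fin n)))
    (x : EuclideanSpace ℝ (Fin n)) : Set ℝ :=
  {a : ℝ | ∃ ℓ : EuclideanSpace ℝ (Fin n) →ᵃ[ℝ] ℝ,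
    (∀ y, ℓ y ≤ lam * ‖y‖ ^ 2 - chi E y) ∧ a = ℓ x}

lemma convEnv_chi_eq {n : ℕ} (lam : ℝ) (E : Set (EuclideanSpace ℝ (Fin n))) (x) :
    convEnv (fun y => lam * ‖y‖ ^ 2 - chi E y) x = sSup (Sset lam E x) := rfl

lemma Sset_nonempty {n : ℕ} {lam : ℝ} (hlam : 0 < lam) (E : Set (EuclideanSpace ℝ (Fin n))) (x) :
    (Sset lam E x).Nonempty := by
  refine ⟨aff lam x 1 x, aff lam x 1, aff_minorant hlam zero_le_one ?_, rfl⟩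
  intro y _
  have : 0 ≤ lam * ‖y - x‖ ^ 2 := by positivity
  linarith

lemma Sset_bddAbove {n : ℕ} {lam : ℝ} (E : Set (EuclideanSpace ℝ (Fin n))) (x) :
    BddAbove (Sset lam E x) := by
  refine ⟨lam * ‖x‖ ^ 2, fun a ha => ?_⟩
  obtain ⟨ℓ, hℓ, rfl⟩ := ha
  have := hℓ x
  have := chi_nonneg E x
  linarith

/-- Key lower bound on the "gap" of any affine minorant. -/
lemma minorant_gap {n : ℕ} {lam : ℝ} (hlam : 0 < lam)
    {E : Set (EuclideanSpace ℝ (Fin n))} (hE : E.Nonempty)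
    (ℓ : EuclideanSpace ℝ (Fin n) →ᵃ[ℝ] ℝ)
    (hℓ : ∀ y, ℓ y ≤ lam * ‖y‖ ^ 2 - chi E y) (x : EuclideanSpace ℝ (Fin n)) :
    1 ≤ Real.sqrt lam * infDist x E + Real.sqrt (lam * ‖x‖ ^ 2 - ℓ x) := by
  set C : ℝ := lam * ‖x‖ ^ 2 - ℓ x with hCdef
  have hC0 : 0 ≤ C := by have := hℓ x; have := chi_nonneg E x; simp only [hCdef]; linarith
  have hsl : 0 < Real.sqrt lam := Real.sqrt_pos.2 hlam
  -- it suffices to bound dist x y below for every y ∈ E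
  have key : ∀ y ∈ E, (1 - Real.sqrt C) / Real.sqrt lam ≤ dist x y := by
    intro y hy
    set v : EuclideanSpace ℝ (Fin n) := y - x with hv
    set A : ℝ := lam * ‖v‖ ^ 2 with hA
    set B : ℝ := 2 * lam * (inner ℝ x v : ℝ) - ℓ.linear v with hB
    have hq : ∀ t : ℝ, lam * ‖x + t • v‖ ^ 2 - ℓ (x + t • v) = A * (t * t) + B * t + C := by
      intro t
      have hn : ‖x + t • v‖ ^ 2 = ‖x‖ ^ 2 + 2 * (t * (inner ℝ x v : ℝ)) + t ^ 2 * ‖v‖ ^ 2 := by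
        rw [norm_add_sq_real, real_inner_smul_right, norm_smul, mul_pow, Real.norm_eq_abs,
          sq_abs]
      have hℓt : ℓ (x + t • v) = t * ℓ.linear v + ℓ x := by
        have := ℓ.map_vadd x (t • v)
        simp only [vadd_eq_add] at this
        rw [add_comm x (t • v), this, ℓ.linear.map_smul, smul_eq_mul]
      rw [hn, hℓt]; simp only [hA, hB, hCdef]; ring
    have hquad : ∀ t : ℝ, 0 ≤ A * (t * t) + B * t + C := by
      intro t
      rw [← hq]
      have := hℓ (x + t • v)
      have := chi_nonneg E (x + t • v)
      linarith
    have h1 : 1 ≤ A + B + C := by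
      have hxy : x + (1 : ℝ) • v = y := by simp [hv]
      have := hℓ (x + (1 : ℝ) • v)
      rw [hxy, chi_of_mem hy] at this
      have hq1 := hq 1
      rw [hxy] at hq1
      nlinarith [this, hq1]
    have hdisc : B ^ 2 - 4 * A * C ≤ 0 := by
      have := discrim_le_zero hquad
      rwa [discrim] at this
    have hA0 : 0 ≤ A := by positivity
    -- B ≤ 2 √A √C
    have hBle : B ≤ 2 * Real.sqrt A * Real.sqrt C := by
      have h2 : B ^ 2 ≤ (2 * Real.sqrt A * Real.sqrt C) ^ 2 := by
        have : (2 * Real.sqrt A * Real.sqrt C) ^ 2 = 4 * A * C := by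
          rw [mul_pow, mul_pow, Real.sq_sqrt hA0, Real.sq_sqrt hC0]; ring
        linarith
      have h3 : 0 ≤ 2 * Real.sqrt A * Real.sqrt C := by positivity
      nlinarith [abs_nonneg B, sq_abs B, le_abs_self B]
    have hsum : 1 ≤ (Real.sqrt A + Real.sqrt C) ^ 2 := by
      have : (Real.sqrt A + Real.sqrt C) ^ 2 = A + 2 * Real.sqrt A * Real.sqrt C + C := by
        rw [add_sq, Real.sq_sqrt hA0, Real.sq_sqrt hC0]
      linarith
    have hsum' : 1 ≤ Real.sqrt A + Real.sqrt C := by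
      nlinarith [Real.sqrt_nonneg A, Real.sqrt_nonneg C]
    have hsA : Real.sqrt A = Real.sqrt lam * dist x y := by
      rw [hA, Real.sqrt_mul hlam.le, Real.sqrt_sq (norm_nonneg v), hv, dist_eq_norm,
        norm_sub_rev]
    rw [hsA] at hsum'
    rw [div_le_iff₀ hsl]
    nlinarith [dist_nonneg (x := x) (y := y)]
  have hinf : (1 - Real.sqrt C) / Real.sqrt lam ≤ infDist x E := by
    by_contra h
    push_neg at h
    obtain ⟨y, hy, hlt⟩ := (infDist_lt_iff hE).1 h
    exact absurd (key y hy) (not_le.2 hlt)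
  rw [div_le_iff₀ hsl] at hinf
  nlinarith [infDist_nonneg (x := x) (s := E)]

/-- Expansion theorem for the upper transform of a characteristic function. -/
theorem upperT_chi_expansion (n : ℕ) (hn : 1 ≤ n)
    (E : Set (EuclideanSpace ℝ (Fin n))) (hE : E.Nonempty)
    (lam : ℝ) (hlam : 0 < lam) (x : EuclideanSpace ℝ (Fin n)) :
    (x ∈ closure E → upperT lam (chi E) x = 1) ∧
    (1 / Real.sqrt lam ≤ Metric.infDist x (closure E) → upperT lam (chi E) x = 0) ∧
    (x ∉ closure E → Metric.infDist x E < 1 / Real.sqrt lam →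
      0 < upperT lam (chi E) x ∧ upperT lam (chi E) x < 1) := by
  have hsl : 0 < Real.sqrt lam := Real.sqrt_pos.2 hlam
  have hSne := Sset_nonempty hlam E x
  have hSbdd := Sset_bddAbove (lam := lam) E x
  have hupper : upperT lam (chi E) x = lam * ‖x‖ ^ 2 - sSup (Sset lam E x) := rfl
  set d : ℝ := infDist x E with hd
  have hd0 : 0 ≤ d := infDist_nonneg
  refine ⟨?_, ?_, ?_⟩
  · -- x ∈ closure E
    intro hx
    have hdz : d = 0 := (mem_closure_iff_infDist_zero hE).1 hx
    have hub : sSup (Sset lam E x) ≤ lam * ‖x‖ ^ 2 - 1 := by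
      apply csSup_le hSne
      rintro a ⟨ℓ, hℓ, rfl⟩
      have hgap := minorant_gap hlam hE ℓ hℓ x
      rw [← hd, hdz, mul_zero, zero_add] at hgap
      have hC0 : 0 ≤ lam * ‖x‖ ^ 2 - ℓ x := by
        have := hℓ x; have := chi_nonneg E x; linarith
      have : 1 ≤ lam * ‖x‖ ^ 2 - ℓ x := by
        nlinarith [Real.sq_sqrt hC0, Real.sqrt_nonneg (lam * ‖x‖ ^ 2 - ℓ x)]
      linarith
    have hlb : lam * ‖x‖ ^ 2 - 1 ≤ sSup (Sset lam E x) := by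
      have hmem : lam * ‖x‖ ^ 2 - 1 ∈ Sset lam E x := by
        refine ⟨aff lam x 1, aff_minorant hlam zero_le_one ?_, ?_⟩
        · intro y _
          have : 0 ≤ lam * ‖y - x‖ ^ 2 := by positivity
          linarith
        · rw [aff_apply]; simp
      exact le_csSup hSbdd hmem
    rw [hupper]; linarith [le_antisymm hub hlb]
  · -- far away
    intro hx
    rw [infDist_closure, ← hd] at hx
    have hxE : x ∉ closure E := by
      intro hmem
      have : d = 0 := (mem_closure_iff_infDist_zero hE).1 hmem
      rw [this] at hx
      exact absurd hx (not_le.2 (by positivity))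
    have hxE' : x ∉ E := fun h => hxE (subset_closure h)
    have hub : sSup (Sset lam E x) ≤ lam * ‖x‖ ^ 2 := by
      apply csSup_le hSne
      rintro a ⟨ℓ, hℓ, rfl⟩
      have := hℓ x
      rw [chi_of_not_mem hxE'] at this
      linarith
    have hlb : lam * ‖x‖ ^ 2 ≤ sSup (Sset lam E x) := by
      have hmem : lam * ‖x‖ ^ 2 ∈ Sset lam E x := by
        refine ⟨aff lam x 0, aff_minorant hlam le_rfl ?_, ?_⟩
        · intro y hy
          have hdy : 1 / Real.sqrt lam ≤ dist x y := le_trans hx (infDist_le_dist_of_mem hy)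
          have hnorm : 1 / Real.sqrt lam ≤ ‖y - x‖ := by
            rwa [dist_eq_norm, norm_sub_rev] at hdy
          have hsq : (1 / Real.sqrt lam) ^ 2 ≤ ‖y - x‖ ^ 2 := by
            apply pow_le_pow_left₀ (by positivity) hnorm
          rw [div_pow, one_pow, Real.sq_sqrt hlam.le] at hsq
          have : 1 / lam * lam ≤ ‖y - x‖ ^ 2 * lam :=
            mul_le_mul_of_nonneg_right hsq hlam.le
          rw [one_div, inv_mul_cancel₀ hlam.ne'] at this
          linarith [this]
        · rw [aff_apply]; simp
      exact le_csSup hSbdd hmem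
    rw [hupper]; linarith [le_antisymm hub hlb]
  · -- intermediate zone
    intro hx hdist
    have hdpos : 0 < d := by
      rcases eq_or_lt_of_le hd0 with h | h
      · exact absurd ((mem_closure_iff_infDist_zero hE).2 h.symm) hx
      · exact h
    have hld : Real.sqrt lam * d < 1 := by
      have := mul_lt_mul_of_pos_left hdist hsl
      rwa [mul_one_div, div_self hsl.ne'] at this
    constructor
    · -- positivity
      have hub : sSup (Sset lam E x) ≤ lam * ‖x‖ ^ 2 - (1 - Real.sqrt lam * d) ^ 2 := by
        apply csSup_le hSne
        rintro a ⟨ℓ, hℓ, rfl⟩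
        have hgap := minorant_gap hlam hE ℓ hℓ x
        rw [← hd] at hgap
        have hC0 : 0 ≤ lam * ‖x‖ ^ 2 - ℓ x := by
          have := hℓ x; have := chi_nonneg E x; linarith
        have hsC : 1 - Real.sqrt lam * d ≤ Real.sqrt (lam * ‖x‖ ^ 2 - ℓ x) := by linarith
        have : (1 - Real.sqrt lam * d) ^ 2 ≤ lam * ‖x‖ ^ 2 - ℓ x := by
          nlinarith [Real.sq_sqrt hC0, Real.sqrt_nonneg (lam * ‖x‖ ^ 2 - ℓ x), hld]
        linarith
      rw [hupper]
      have : 0 < (1 - Real.sqrt lam * d) ^ 2 := pow_pos (by linarith) 2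
      nlinarith [hub, this]
      -- 0 < lam‖x‖² - sSup
    · -- upper bound < 1
      have hs0 : 0 < 1 - lam * d ^ 2 := by
        have hsq : d ^ 2 < (1 / Real.sqrt lam) ^ 2 := by
          apply pow_lt_pow_left₀ hdist hd0
          norm_num
        rw [div_pow, one_pow, Real.sq_sqrt hlam.le] at hsq
        have := mul_lt_mul_of_pos_left hsq hlam
        rw [mul_one_div, div_self hlam.ne'] at this
        linarith
      have hlb : lam * ‖x‖ ^ 2 - (1 - lam * d ^ 2) ≤ sSup (Sset lam E x) := by
        have hmem : lam * ‖x‖ ^ 2 - (1 - lam * d ^ 2) ∈ Sset lam E x := by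
          refine ⟨aff lam x (1 - lam * d ^ 2), aff_minorant hlam hs0.le ?_, ?_⟩
          · intro y hy
            have hdy : d ≤ dist x y := infDist_le_dist_of_mem hy
            have hnorm : d ≤ ‖y - x‖ := by rwa [dist_eq_norm, norm_sub_rev] at hdy
            have hsq : d ^ 2 ≤ ‖y - x‖ ^ 2 := pow_le_pow_left₀ hd0 hnorm 2
            nlinarith [hsq, hlam]
          · rw [aff_apply]; simp
        exact le_csSup hSbdd hmem
      rw [hupper]
      have hld2 : 0 < lam * d ^ 2 := by positivity
      linarith
end

section
/- Let n ≥ 1 and let f : ℝⁿ → ℝ satisfy |f(x)| ≤ C₁|x|² + C₂ for all x ∈ ℝⁿ, with constants C₁, C₂ ≥ 0. Then for every λ > C₁ and every affine function ℓ : ℝⁿ → ℝ, the ridge and valley transforms are translation invariant: R_λ(f + ℓ)(x) = R_λ(f)(x) and V_λ(f + ℓ)(x) = V_λ(f)(x) for all x ∈ ℝⁿ; consequently the edge transform satisfies E_λ(f + ℓ) = E_λ(f). -/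
/-- Ridge transform `R_λ(f) = f − C^l_λ(f)`. -/
noncomputable def ridgeT {n : ℕ} (lam : ℝ) (f : EuclideanSpace ℝ (Fin n) → ℝ)
    (x : EuclideanSpace ℝ (Fin n)) : ℝ :=
  f x - lowerT lam f x

/-- Valley transform `V_λ(f) = f − C^u_λ(f)`. -/
noncomputable def valleyT {n : ℕ} (lam : ℝ) (f : EuclideanSpace ℝ (Fin n) → ℝ)
    (x : EuclideanSpace ℝ (Fin n)) : ℝ :=
  f x - upperT lam f x

/-- Edge transform `E_λ(f) = C^u_λ(f) − C^l_λ(f)`. -/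
noncomputable def edgeT {n : ℕ} (lam : ℝ) (f : EuclideanSpace ℝ (Fin n) → ℝ)
    (x : EuclideanSpace ℝ (Fin n)) : ℝ :=
  upperT lam f x - lowerT lam f x


lemma sSup_add_const {S : Set ℝ} (hne : S.Nonempty) (hbdd : BddAbove S) (c : ℝ) :
    sSup ((fun a => a + c) '' S) = sSup S + c :=
  ((OrderIso.addRight c).map_csSup' hne hbdd).symm

lemma convEnv_add_affine' {n : ℕ} (g : EuclideanSpace ℝ (Fin n) → ℝ)
    (ℓ ℓ₀ : EuclideanSpace ℝ (Fin n) →ᵃ[ℝ] ℝ) (h₀ : ∀ y, ℓ₀ y ≤ g y)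
    (x : EuclideanSpace ℝ (Fin n)) :
    sSup {a : ℝ | ∃ ℓ' : EuclideanSpace ℝ (Fin n) →ᵃ[ℝ] ℝ,
        (∀ y, ℓ' y ≤ g y + ℓ y) ∧ a = ℓ' x}
      = sSup {a : ℝ | ∃ ℓ' : EuclideanSpace ℝ (Fin n) →ᵃ[ℝ] ℝ,
        (∀ y, ℓ' y ≤ g y) ∧ a = ℓ' x} + ℓ x := by
  set S := {a : ℝ | ∃ ℓ' : EuclideanSpace ℝ (Fin n) →ᵃ[ℝ] ℝ, (∀ y, ℓ' y ≤ g y) ∧ a = ℓ' x}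
  have hne : S.Nonempty := ⟨ℓ₀ x, ℓ₀, h₀, rfl⟩
  have hbdd : BddAbove S := ⟨g x, by rintro a ⟨ℓ', h', rfl⟩; exact h' x⟩
  have himg : {a : ℝ | ∃ ℓ' : EuclideanSpace ℝ (Fin n) →ᵃ[ℝ] ℝ,
      (∀ y, ℓ' y ≤ g y + ℓ y) ∧ a = ℓ' x} = (fun a => a + ℓ x) '' S := by
    ext a
    constructor
    · rintro ⟨ℓ', h', rfl⟩
      exact ⟨(ℓ' - ℓ) x, ⟨ℓ' - ℓ, fun y => by
        simpa [sub_le_iff_le_add] using h' y, rfl⟩, by simp⟩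
    · rintro ⟨_, ⟨ℓ', h', rfl⟩, rfl⟩
      exact ⟨ℓ' + ℓ, fun y => by simpa using add_le_add_right (h' y) (ℓ y), by simp⟩
  rw [himg, sSup_add_const hne hbdd]

lemma convEnv_add_affine {n : ℕ} (g : EuclideanSpace ℝ (Fin n) → ℝ)
    (ℓ ℓ₀ : EuclideanSpace ℝ (Fin n) →ᵃ[ℝ] ℝ) (h₀ : ∀ y, ℓ₀ y ≤ g y)
    (x : EuclideanSpace ℝ (Fin n)) :
    convEnv (fun y => g y + ℓ y) x = convEnv g x + ℓ x :=
  convEnv_add_affine' g ℓ ℓ₀ h₀ x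

/-- Translation (affine) invariance of the ridge, valley and edge transforms. -/
theorem ridge_valley_edge_affine_invariant (n : ℕ) (hn : 1 ≤ n)
    (f : EuclideanSpace ℝ (Fin n) → ℝ) (C₁ C₂ : ℝ) (hC₁ : 0 ≤ C₁) (hC₂ : 0 ≤ C₂)
    (hf : ∀ x, |f x| ≤ C₁ * ‖x‖ ^ 2 + C₂)
    (lam : ℝ) (hlam : C₁ < lam) (ℓ : EuclideanSpace ℝ (Fin n) →ᵃ[ℝ] ℝ)
    (x : EuclideanSpace ℝ (Fin n)) :
    ridgeT lam (fun y => f y + ℓ y) x = ridgeT lam f x ∧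
    valleyT lam (fun y => f y + ℓ y) x = valleyT lam f x ∧
    edgeT lam (fun y => f y + ℓ y) x = edgeT lam f x := by
  have hquad : ∀ y : EuclideanSpace ℝ (Fin n), (0:ℝ) ≤ (lam - C₁) * ‖y‖ ^ 2 :=
    fun y => mul_nonneg (by linarith) (by positivity)
  set ℓ₀ : EuclideanSpace ℝ (Fin n) →ᵃ[ℝ] ℝ :=
    AffineMap.const ℝ (EuclideanSpace ℝ (Fin n)) (-C₂) with hℓ₀
  have h₁ : ∀ y, ℓ₀ y ≤ f y + lam * ‖y‖ ^ 2 := by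
    intro y
    have h := abs_le.mp (hf y)
    have := hquad y
    simp only [hℓ₀, AffineMap.const_apply]
    nlinarith
  have h₂ : ∀ y, ℓ₀ y ≤ lam * ‖y‖ ^ 2 - f y := by
    intro y
    have h := abs_le.mp (hf y)
    have := hquad y
    simp only [hℓ₀, AffineMap.const_apply]
    nlinarith
  have e₁ : (fun y : EuclideanSpace ℝ (Fin n) => (f y + ℓ y) + lam * ‖y‖ ^ 2)
      = fun y => (f y + lam * ‖y‖ ^ 2) + ℓ y := funext fun y => by ring
  have e₂ : (fun y : EuclideanSpace ℝ (Fin n) => lam * ‖y‖ ^ 2 - (f y + ℓ y))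
      = fun y => (lam * ‖y‖ ^ 2 - f y) + (-ℓ) y := funext fun y => by
    simp; ring
  have k₁ : convEnv (fun y => (f y + ℓ y) + lam * ‖y‖ ^ 2) x
      = convEnv (fun y => f y + lam * ‖y‖ ^ 2) x + ℓ x := by
    rw [e₁]; exact convEnv_add_affine _ ℓ ℓ₀ h₁ x
  have k₂ : convEnv (fun y => lam * ‖y‖ ^ 2 - (f y + ℓ y)) x
      = convEnv (fun y => lam * ‖y‖ ^ 2 - f y) x - ℓ x := by
    rw [e₂, convEnv_add_affine _ (-ℓ) ℓ₀ h₂ x]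
    simp; ring
  refine ⟨?_, ?_, ?_⟩ <;>
    simp only [ridgeT, valleyT, edgeT, lowerT, upperT, k₁, k₂] <;> ring
end

section
/- Let n ≥ 1 and let f : ℝⁿ → ℝ satisfy |f(x)| ≤ C₁|x|² + C₂ for all x ∈ ℝⁿ, with constants C₁, C₂ ≥ 0. Then for every α > 0 and every λ with λ/α > C₁, the ridge and valley transforms are scale covariant: R_λ(αf)(x) = α · R_{λ/α}(f)(x) and V_λ(αf)(x) = α · V_{λ/α}(f)(x) for all x ∈ ℝⁿ; consequently E_λ(αf) = α · E_{λ/α}(f). -/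
/-- The convex envelope commutes with positive scalar multiplication. -/
lemma convEnv_mul {n : ℕ} (α : ℝ) (hα : 0 < α) (g : EuclideanSpace ℝ (Fin n) → ℝ)
    (x : EuclideanSpace ℝ (Fin n)) :
    convEnv (fun y => α * g y) x = α * convEnv g x := by
  unfold convEnv
  rw [← smul_eq_mul, ← Real.sSup_smul_of_nonneg hα.le]
  congr 1
  ext a
  simp only [Set.mem_smul_set, Set.mem_setOf_eq, smul_eq_mul]
  constructor
  · rintro ⟨ℓ, hℓ, rfl⟩
    refine ⟨α⁻¹ * ℓ x, ⟨α⁻¹ • ℓ, fun y => ?_, by simp [smul_eq_mul]⟩, by field_simp⟩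
    simp only [AffineMap.coe_smul, Pi.smul_apply, smul_eq_mul]
    rw [inv_mul_le_iff₀ hα]
    linarith [hℓ y]
  · rintro ⟨b, ⟨ℓ, hℓ, rfl⟩, rfl⟩
    exact ⟨α • ℓ, fun y => by
      simpa [smul_eq_mul] using mul_le_mul_of_nonneg_left (hℓ y) hα.le, by simp [smul_eq_mul]⟩

/-- Scale covariance of the ridge, valley and edge transforms. -/
theorem ridge_valley_edge_scale_covariant (n : ℕ) (hn : 1 ≤ n)
    (f : EuclideanSpace ℝ (Fin n) → ℝ) (C₁ C₂ : ℝ) (hC₁ : 0 ≤ C₁) (hC₂ : 0 ≤ C₂)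
    (hf : ∀ x, |f x| ≤ C₁ * ‖x‖ ^ 2 + C₂)
    (α : ℝ) (hα : 0 < α) (lam : ℝ) (hlam : C₁ < lam / α)
    (x : EuclideanSpace ℝ (Fin n)) :
    ridgeT lam (fun y => α * f y) x = α * ridgeT (lam / α) f x ∧
    valleyT lam (fun y => α * f y) x = α * valleyT (lam / α) f x ∧
    edgeT lam (fun y => α * f y) x = α * edgeT (lam / α) f x := by
  have hα' : α ≠ 0 := hα.ne'
  have hlow : lowerT lam (fun y => α * f y) x = α * lowerT (lam / α) f x := by
    unfold lowerT
    have h1 : (fun y : EuclideanSpace ℝ (Fin n) => α * f y + lam * ‖y‖ ^ 2)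
        = fun y => α * (f y + lam / α * ‖y‖ ^ 2) := by
      funext y; field_simp
    rw [h1, convEnv_mul α hα]
    field_simp
  have hupp : upperT lam (fun y => α * f y) x = α * upperT (lam / α) f x := by
    unfold upperT
    have h1 : (fun y : EuclideanSpace ℝ (Fin n) => lam * ‖y‖ ^ 2 - α * f y)
        = fun y => α * (lam / α * ‖y‖ ^ 2 - f y) := by
      funext y; field_simp
    rw [h1, convEnv_mul α hα]
    field_simp
  refine ⟨?_, ?_, ?_⟩ <;> simp only [ridgeT, valleyT, edgeT, hlow, hupp] <;> ring
end

section
/- Let n ≥ 1, let f : ℝⁿ → ℝ satisfy |f(x)| ≤ C₁|x|² + C₂ for all x ∈ ℝⁿ with constants C₁, C₂ ≥ 0, and let g : ℝⁿ → ℝ be differentiable with |Dg(x) − Dg(y)| ≤ ε|x − y| for all x, y ∈ ℝⁿ. Then for every λ with λ − ε > C₁ and every x ∈ ℝⁿ: R_{λ+ε}(f)(x) ≤ R_λ(f + g)(x) ≤ R_{λ−ε}(f)(x); V_{λ−ε}(f)(x) ≤ V_λ(f + g)(x) ≤ V_{λ+ε}(f)(x); and E_{λ+ε}(f)(x) ≤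 E_λ(f + g)(x) ≤ E_{λ−ε}(f)(x). -/
open scoped RealInnerProductSpace

noncomputable def affMap {n : ℕ} (v : EuclideanSpace ℝ (Fin n)) (c : ℝ) :
    EuclideanSpace ℝ (Fin n) →ᵃ[ℝ] ℝ :=
  ((innerSL ℝ v).toLinearMap).toAffineMap + AffineMap.const ℝ _ c

lemma affMap_apply {n : ℕ} (v y : EuclideanSpace ℝ (Fin n)) (c : ℝ) :
    affMap v c y = ⟪v, y⟫ + c := by
  simp [affMap]

lemma convEnv_superadd {n : ℕ} (F G FG : EuclideanSpace ℝ (Fin n) → ℝ)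
    (hFG : ∀ y, F y + G y ≤ FG y)
    (hFne : ∃ ℓ : EuclideanSpace ℝ (Fin n) →ᵃ[ℝ] ℝ, ∀ y, ℓ y ≤ F y)
    (x : EuclideanSpace ℝ (Fin n))
    (ℓG : EuclideanSpace ℝ (Fin n) →ᵃ[ℝ] ℝ) (hG : ∀ y, ℓG y ≤ G y) (hGx : ℓG x = G x) :
    convEnv F x + G x ≤ convEnv FG x := by
  have hbdd : BddAbove {a : ℝ | ∃ ℓ : EuclideanSpace ℝ (Fin n) →ᵃ[ℝ] ℝ,
      (∀ y, ℓ y ≤ FG y) ∧ a = ℓ x} := by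
    refine ⟨FG x, ?_⟩
    rintro a ⟨ℓ, hℓ, rfl⟩
    exact hℓ x
  obtain ⟨ℓ₀, hℓ₀⟩ := hFne
  have hne : (ℓ₀ x) ∈ {a : ℝ | ∃ ℓ : EuclideanSpace ℝ (Fin n) →ᵃ[ℝ] ℝ,
      (∀ y, ℓ y ≤ F y) ∧ a = ℓ x} := ⟨ℓ₀, hℓ₀, rfl⟩
  have key : convEnv F x ≤ convEnv FG x - G x := by
    apply csSup_le ⟨_, hne⟩
    rintro a ⟨ℓ, hℓ, rfl⟩
    have hmem : (ℓ + ℓG) x ∈ {a : ℝ | ∃ ℓ' : EuclideanSpace ℝ (Fin n) →ᵃ[ℝ] ℝ,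
        (∀ y, ℓ' y ≤ FG y) ∧ a = ℓ' x} := by
      refine ⟨ℓ + ℓG, fun y => ?_, rfl⟩
      have h1 := hℓ y; have h2 := hG y; have h3 := hFG y
      simp only [AffineMap.coe_add, Pi.add_apply]
      linarith
    have := le_csSup hbdd hmem
    simp only [AffineMap.coe_add, Pi.add_apply, hGx] at this
    rw [convEnv]
    linarith
  linarith

lemma taylor_grad_bound {n : ℕ} (g : EuclideanSpace ℝ (Fin n) → ℝ)
    (g' : EuclideanSpace ℝ (Fin n) → EuclideanSpace ℝ (Fin n))
    (hg : ∀ x, HasGradientAt g (g' x) x)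
    (ε : ℝ) (hε : 0 ≤ ε)
    (hLip : ∀ x y, ‖g' x - g' y‖ ≤ ε * ‖x - y‖)
    (x y : EuclideanSpace ℝ (Fin n)) :
    |g y - g x - ⟪g' x, y - x⟫| ≤ ε * ‖y - x‖ ^ 2 := by
  set c : ℝ → EuclideanSpace ℝ (Fin n) := fun t => x + t • (y - x) with hc_def
  set φ : ℝ → ℝ := fun t => g (c t) - t * ⟪g' x, y - x⟫ with hφ_def
  have hc : ∀ t : ℝ, HasDerivAt c (y - x) t := by
    intro t
    have := ((hasDerivAt_id t).smul_const (y - x)).const_add x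
    simpa [hc_def] using this
  have hφ : ∀ t : ℝ, HasDerivAt φ (⟪g' (c t) - g' x, y - x⟫) t := by
    intro t
    have h1 : HasDerivAt (fun t => g (c t)) ⟪g' (c t), y - x⟫ t := by
      have := ((hg (c t)).hasFDerivAt.comp_hasDerivAt t (hc t))
      simp [InnerProductSpace.toDual_apply_apply] at this
      exact this
    have h2 : HasDerivAt (fun t : ℝ => t * ⟪g' x, y - x⟫) ⟪g' x, y - x⟫ t := by
      simpa using (hasDerivAt_id t).mul_const (⟪g' x, y - x⟫ : ℝ)
    have := h1.sub h2
    rw [inner_sub_left]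
    exact this
  have hbound : ∀ t ∈ Set.Icc (0:ℝ) 1, ‖(⟪g' (c t) - g' x, y - x⟫ : ℝ)‖ ≤ ε * ‖y - x‖ ^ 2 := by
    rintro t ⟨ht0, ht1⟩
    have h1 : ‖(⟪g' (c t) - g' x, y - x⟫ : ℝ)‖ ≤ ‖g' (c t) - g' x‖ * ‖y - x‖ :=
      norm_inner_le_norm _ _
    have h2 : ‖g' (c t) - g' x‖ ≤ ε * ‖c t - x‖ := hLip _ _
    have h3 : ‖c t - x‖ = t * ‖y - x‖ := by
      simp [hc_def, norm_smul, abs_of_nonneg ht0]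
    have h4 : ε * (t * ‖y - x‖) ≤ ε * ‖y - x‖ := by
      have h5 : 0 ≤ ε * ‖y - x‖ * (1 - t) :=
        mul_nonneg (mul_nonneg hε (norm_nonneg _)) (by linarith)
      nlinarith
    calc ‖(⟪g' (c t) - g' x, y - x⟫ : ℝ)‖ ≤ ‖g' (c t) - g' x‖ * ‖y - x‖ := h1
      _ ≤ (ε * (t * ‖y - x‖)) * ‖y - x‖ := by
          rw [← h3]; exact mul_le_mul_of_nonneg_right h2 (norm_nonneg _)
      _ ≤ (ε * ‖y - x‖) * ‖y - x‖ := mul_le_mul_of_nonneg_right h4 (norm_nonneg _)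
      _ = ε * ‖y - x‖ ^ 2 := by ring
  have hmvt := Convex.norm_image_sub_le_of_norm_hasDerivWithin_le
    (f := φ) (f' := fun t => (⟪g' (c t) - g' x, y - x⟫ : ℝ)) (s := Set.Icc (0:ℝ) 1)
    (fun t ht => (hφ t).hasDerivWithinAt) hbound (convex_Icc 0 1)
    (Set.left_mem_Icc.2 zero_le_one) (Set.right_mem_Icc.2 zero_le_one)
  have hφ1 : φ 1 = g y - ⟪g' x, y - x⟫ := by simp [hφ_def, hc_def]
  have hφ0 : φ 0 = g x := by simp [hφ_def, hc_def]
  rw [hφ1, hφ0] at hmvt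
  have : |g y - g x - ⟪g' x, y - x⟫| = ‖g y - ⟪g' x, y - x⟫ - g x‖ := by
    rw [Real.norm_eq_abs]; ring_nf
  rw [this]
  simpa using hmvt

/-- Stability of the ridge, valley and edge transforms under curvature
perturbations: if `Dg` is `ε`-Lipschitz and `λ − ε > C₁`, then
`R_{λ+ε}(f) ≤ R_λ(f+g) ≤ R_{λ−ε}(f)` and similarly for `V` and `E`. -/
theorem ridge_valley_edge_curvature_stability (n : ℕ) (hn : 1 ≤ n)
    (f : EuclideanSpace ℝ (Fin n) → ℝ) (C₁ C₂ : ℝ) (hC₁ : 0 ≤ C₁) (hC₂ : 0 ≤ C₂)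
    (hf : ∀ x, |f x| ≤ C₁ * ‖x‖ ^ 2 + C₂)
    (g : EuclideanSpace ℝ (Fin n) → ℝ)
    (g' : EuclideanSpace ℝ (Fin n) → EuclideanSpace ℝ (Fin n))
    (hg : ∀ x, HasGradientAt g (g' x) x)
    (ε : ℝ) (hLip : ∀ x y, ‖g' x - g' y‖ ≤ ε * ‖x - y‖)
    (lam : ℝ) (hlam : C₁ < lam - ε) (x : EuclideanSpace ℝ (Fin n)) :
    (ridgeT (lam + ε) f x ≤ ridgeT lam (fun y => f y + g y) x ∧
      ridgeT lam (fun y => f y + g y) x ≤ ridgeT (lam - ε) f x) ∧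
    (valleyT (lam - ε) f x ≤ valleyT lam (fun y => f y + g y) x ∧
      valleyT lam (fun y => f y + g y) x ≤ valleyT (lam + ε) f x) ∧
    (edgeT (lam + ε) f x ≤ edgeT lam (fun y => f y + g y) x ∧
      edgeT lam (fun y => f y + g y) x ≤ edgeT (lam - ε) f x) := by
  classical
  -- ε is nonnegative
  have hε : 0 ≤ ε := by
    have h := hLip (EuclideanSpace.single (⟨0, hn⟩ : Fin n) (1:ℝ)) 0
    have h2 : ‖(EuclideanSpace.single (⟨0, hn⟩ : Fin n) (1:ℝ)) - 0‖ = 1 := by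
      simp [EuclideanSpace.norm_single]
    rw [h2, mul_one] at h
    exact le_trans (norm_nonneg _) h
  have htay := taylor_grad_bound g g' hg ε hε hLip
  -- inner product / norm expansions
  have hnexp : ∀ z y : EuclideanSpace ℝ (Fin n), ‖y - z‖ ^ 2 = ‖y‖ ^ 2 - 2 * ⟪z, y⟫ + ‖z‖ ^ 2 := by
    intro z y
    rw [@norm_sub_sq_real, real_inner_comm]; try ring
  -- supporting affine map for g + ε‖·‖² at x
  set ℓ₁ : EuclideanSpace ℝ (Fin n) →ᵃ[ℝ] ℝ :=
    affMap (g' x + (2*ε) • x) (g x + ε*‖x‖^2 - ⟪g' x, x⟫ - 2*ε*‖x‖^2) with hℓ₁_def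
  have hℓ₁app : ∀ y, ℓ₁ y = ⟪g' x, y⟫ + 2*ε*⟪x, y⟫ + (g x + ε*‖x‖^2 - ⟪g' x, x⟫ - 2*ε*‖x‖^2) := by
    intro y
    rw [hℓ₁_def, affMap_apply, inner_add_left, real_inner_smul_left]; try ring
  have hℓ₁x : ℓ₁ x = g x + ε*‖x‖^2 := by
    rw [hℓ₁app, real_inner_self_eq_norm_sq]; try ring
  have hℓ₁ : ∀ y, ℓ₁ y ≤ g y + ε*‖y‖^2 := by
    intro y
    have ht := (abs_le.1 (htay x y)).1
    rw [inner_sub_right, hnexp x y] at ht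
    rw [hℓ₁app]
    linarith [ht]
  -- supporting affine map for -g + ε‖·‖² at x
  set ℓ₂ : EuclideanSpace ℝ (Fin n) →ᵃ[ℝ] ℝ :=
    affMap (-(g' x) + (2*ε) • x) (-(g x) + ε*‖x‖^2 + ⟪g' x, x⟫ - 2*ε*‖x‖^2) with hℓ₂_def
  have hℓ₂app : ∀ y, ℓ₂ y = -⟪g' x, y⟫ + 2*ε*⟪x, y⟫ + (-(g x) + ε*‖x‖^2 + ⟪g' x, x⟫ - 2*ε*‖x‖^2) := by
    intro y
    rw [hℓ₂_def, affMap_apply, inner_add_left, real_inner_smul_left, inner_neg_left]; try ring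
  have hℓ₂x : ℓ₂ x = -(g x) + ε*‖x‖^2 := by
    rw [hℓ₂app, real_inner_self_eq_norm_sq]; try ring
  have hℓ₂ : ∀ y, ℓ₂ y ≤ -(g y) + ε*‖y‖^2 := by
    intro y
    have ht := (abs_le.1 (htay x y)).2
    rw [inner_sub_right, hnexp x y] at ht
    rw [hℓ₂app]
    linarith [ht]
  -- nonemptiness of affine minorant sets
  have habs := fun y => abs_le.1 (hf y)
  have hg0 : ∀ y : EuclideanSpace ℝ (Fin n), |g y - g 0 - ⟪g' 0, y⟫| ≤ ε * ‖y‖^2 := by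
    intro y
    have := htay 0 y
    simpa using this
  have hne1 : ∀ μ : ℝ, C₁ ≤ μ → ∃ ℓ : EuclideanSpace ℝ (Fin n) →ᵃ[ℝ] ℝ, ∀ y, ℓ y ≤ f y + μ*‖y‖^2 := by
    intro μ hμ
    refine ⟨affMap 0 (-C₂), fun y => ?_⟩
    rw [affMap_apply, inner_zero_left]
    have h1 := (habs y).1
    linarith [h1, mul_le_mul_of_nonneg_right hμ (sq_nonneg ‖y‖)]
  have hne2 : ∀ μ : ℝ, C₁ ≤ μ → ∃ ℓ : EuclideanSpace ℝ (Fin n) →ᵃ[ℝ] ℝ, ∀ y, ℓ y ≤ μ*‖y‖^2 - f y := by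
    intro μ hμ
    refine ⟨affMap 0 (-C₂), fun y => ?_⟩
    rw [affMap_apply, inner_zero_left]
    have h1 := (habs y).2
    linarith [h1, mul_le_mul_of_nonneg_right hμ (sq_nonneg ‖y‖)]
  have hlam1 : C₁ + ε ≤ lam := by linarith
  have hne3 : ∃ ℓ : EuclideanSpace ℝ (Fin n) →ᵃ[ℝ] ℝ, ∀ y, ℓ y ≤ f y + g y + lam*‖y‖^2 := by
    refine ⟨affMap (g' 0) (g 0 - C₂), fun y => ?_⟩
    rw [affMap_apply]
    have h1 := (habs y).1
    have h2 := (abs_le.1 (hg0 y)).1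
    linarith [h1, h2, mul_le_mul_of_nonneg_right hlam1 (sq_nonneg ‖y‖)]
  have hne4 : ∃ ℓ : EuclideanSpace ℝ (Fin n) →ᵃ[ℝ] ℝ, ∀ y, ℓ y ≤ lam*‖y‖^2 - (f y + g y) := by
    refine ⟨affMap (-(g' 0)) (-(g 0) - C₂), fun y => ?_⟩
    rw [affMap_apply, inner_neg_left]
    have h1 := (habs y).2
    have h2 := (abs_le.1 (hg0 y)).2
    linarith [h1, h2, mul_le_mul_of_nonneg_right hlam1 (sq_nonneg ‖y‖)]
  -- the four key envelope inequalities
  have I1 : convEnv (fun y => f y + (lam - ε)*‖y‖^2) x + (g x + ε*‖x‖^2) ≤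
      convEnv (fun y => f y + g y + lam*‖y‖^2) x := by
    refine convEnv_superadd _ (fun y => g y + ε*‖y‖^2) _ (fun y => le_of_eq (by ring))
      (hne1 (lam - ε) (le_of_lt hlam)) x ℓ₁ hℓ₁ hℓ₁x
  have I2 : convEnv (fun y => f y + g y + lam*‖y‖^2) x + (-(g x) + ε*‖x‖^2) ≤
      convEnv (fun y => f y + (lam + ε)*‖y‖^2) x := by
    refine convEnv_superadd _ (fun y => -(g y) + ε*‖y‖^2) _ (fun y => le_of_eq (by ring))
      hne3 x ℓ₂ hℓ₂ hℓ₂x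
  have I3 : convEnv (fun y => (lam - ε)*‖y‖^2 - f y) x + (-(g x) + ε*‖x‖^2) ≤
      convEnv (fun y => lam*‖y‖^2 - (f y + g y)) x := by
    refine convEnv_superadd _ (fun y => -(g y) + ε*‖y‖^2) _ (fun y => le_of_eq (by ring))
      (hne2 (lam - ε) (le_of_lt hlam)) x ℓ₂ hℓ₂ hℓ₂x
  have I4 : convEnv (fun y => lam*‖y‖^2 - (f y + g y)) x + (g x + ε*‖x‖^2) ≤
      convEnv (fun y => (lam + ε)*‖y‖^2 - f y) x := by
    refine convEnv_superadd _ (fun y => g y + ε*‖y‖^2) _ (fun y => le_of_eq (by ring))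
      hne4 x ℓ₁ hℓ₁ hℓ₁x
  simp only [ridgeT, valleyT, edgeT, lowerT, upperT]
  refine ⟨⟨by linarith, by linarith⟩, ⟨by linarith, by linarith⟩, by linarith, by linarith⟩
end

section
/- Let n ≥ 1, let K ⊂ ℝⁿ be a non-empty closed set with K ≠ ℝⁿ, let λ > 0 and let x be a point of the medial axis M_K of K. Let θ_x = sup{ ∠(y₁ − x, y₂ − x) : y₁, y₂ ∈ K(x) } be the separation angle of x, where K(x) = { y ∈ K : |x − y| = dist(x, K) } and ∠ denotes the angle between two nonzero vectors of ℝⁿ. Then sin²(θ_x/2) · dist²(x, K) ≤ M_λ(x; K) ≤ dist²(x, K). -/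
/-- Quadratic multiscale medial axis map
`M_λ(x; K) = (1+λ)(dist²(x;K) − C^l_λ(dist²(·;K))(x))`. -/
noncomputable def mmam {n : ℕ} (lam : ℝ) (K : Set (EuclideanSpace ℝ (Fin n)))
    (x : EuclideanSpace ℝ (Fin n)) : ℝ :=
  (1 + lam) * (Metric.infDist x K ^ 2 - lowerT lam (fun y => Metric.infDist y K ^ 2) x)

/-- The separation angle `θ_x` of a point `x` relative to a closed set `K`:
the sup of angles `∠(y₁ − x, y₂ − x)` over pairs of nearest points `y₁, y₂ ∈ K(x)`. -/
noncomputable def sepAngle {n : ℕ} (K : Set (EuclideanSpace ℝ (Fin n)))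
    (x : EuclideanSpace ℝ (Fin n)) : ℝ :=
  sSup {θ : ℝ | ∃ y₁ ∈ K, ∃ y₂ ∈ K,
    dist x y₁ = Metric.infDist x K ∧ dist x y₂ = Metric.infDist x K ∧
    θ = InnerProductGeometry.angle (y₁ - x) (y₂ - x)}

open Metric InnerProductGeometry RealInnerProductSpace in
/-- Auxiliary affine map `y ↦ 2·lam·⟪x,y⟫ + c`. -/
noncomputable def affAux {n : ℕ} (lam c : ℝ) (x : EuclideanSpace ℝ (Fin n)) :
    EuclideanSpace ℝ (Fin n) →ᵃ[ℝ] ℝ where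
  toFun := fun y => 2 * lam * (inner ℝ x y : ℝ) + c
  linear := (2 * lam) • ((innerSL ℝ x).toLinearMap)
  map_vadd' := by
    intro p v
    simp only [vadd_eq_add, inner_add_right, LinearMap.smul_apply,
      ContinuousLinearMap.coe_coe, innerSL_apply_apply, smul_eq_mul]
    ring

open RealInnerProductSpace in
@[simp] lemma affAux_apply {n : ℕ} (lam c : ℝ) (x y : EuclideanSpace ℝ (Fin n)) :
    affAux lam c x y = 2 * lam * ⟪x, y⟫ + c := rfl

lemma sin_sq_half_of_cos {θ : ℝ} : Real.sin (θ / 2) ^ 2 = (1 - Real.cos θ) / 2 := by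
  have h1 := Real.cos_two_mul (θ / 2)
  have h2 : Real.sin (θ / 2) ^ 2 = 1 - Real.cos (θ / 2) ^ 2 := Real.sin_sq (θ / 2)
  have h3 : 2 * (θ / 2) = θ := by ring
  rw [h3] at h1
  linarith

lemma abs_sin_sub_sin_le (a b : ℝ) : |Real.sin a - Real.sin b| ≤ |a - b| := by
  rw [Real.sin_sub_sin]
  have h1 : |Real.sin ((a - b) / 2)| ≤ |(a - b) / 2| := Real.abs_sin_le_abs
  have h2 : |Real.cos ((a + b) / 2)| ≤ 1 := Real.abs_cos_le_one _
  calc |2 * Real.sin ((a - b) / 2) * Real.cos ((a + b) / 2)|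
      = 2 * |Real.sin ((a - b) / 2)| * |Real.cos ((a + b) / 2)| := by
        rw [abs_mul, abs_mul]; norm_num
    _ ≤ 2 * |(a - b) / 2| * 1 := by
        apply mul_le_mul (by linarith) h2 (abs_nonneg _) (by positivity)
    _ = |a - b| := by rw [abs_div, abs_two]; ring

open Metric InnerProductGeometry RealInnerProductSpace in
/-- The set of values of affine minorants of `dist² + lam‖·‖²` at `x` is nonempty
and bounded above. -/
lemma convEnv_set_props {n : ℕ} (K : Set (EuclideanSpace ℝ (Fin n))) (lam : ℝ)
    (hlam : 0 < lam) (x : EuclideanSpace ℝ (Fin n)) :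
    {a : ℝ | ∃ ℓ : EuclideanSpace ℝ (Fin n) →ᵃ[ℝ] ℝ,
      (∀ y, ℓ y ≤ Metric.infDist y K ^ 2 + lam * ‖y‖ ^ 2) ∧ a = ℓ x}.Nonempty ∧
    BddAbove {a : ℝ | ∃ ℓ : EuclideanSpace ℝ (Fin n) →ᵃ[ℝ] ℝ,
      (∀ y, ℓ y ≤ Metric.infDist y K ^ 2 + lam * ‖y‖ ^ 2) ∧ a = ℓ x} := by
  constructor
  · refine ⟨0, AffineMap.const ℝ _ (0:ℝ), fun y => ?_, rfl⟩
    have h1 : (0:ℝ) ≤ Metric.infDist y K ^ 2 := by positivity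
    have h2 : (0:ℝ) ≤ lam * ‖y‖ ^ 2 := mul_nonneg hlam.le (by positivity)
    simpa using add_nonneg h1 h2
  · refine ⟨Metric.infDist x K ^ 2 + lam * ‖x‖ ^ 2, ?_⟩
    rintro a ⟨ℓ, hle, rfl⟩
    exact hle x

open Metric InnerProductGeometry RealInnerProductSpace in
/-- Lower bound on the convex envelope via an explicit affine minorant. -/
lemma convEnv_ge_of_infDist {n : ℕ} (K : Set (EuclideanSpace ℝ (Fin n))) (lam : ℝ)
    (hlam : 0 < lam) (x : EuclideanSpace ℝ (Fin n)) (hd : 0 < Metric.infDist x K) :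
    lam * ‖x‖ ^ 2 + lam * Metric.infDist x K ^ 2 / (1 + lam) ≤
      convEnv (fun y => Metric.infDist y K ^ 2 + lam * ‖y‖ ^ 2) x := by
  have hlam1 : (0:ℝ) < 1 + lam := by linarith
  set d : ℝ := Metric.infDist x K with hd_def
  apply le_csSup (convEnv_set_props K lam hlam x).2
  refine ⟨affAux lam (-(lam * ‖x‖ ^ 2) + lam * d ^ 2 / (1 + lam)) x, fun y => ?_, ?_⟩
  · rw [affAux_apply]
    have hkey : lam * d ^ 2 / (1 + lam) ≤ Metric.infDist y K ^ 2 + lam * dist x y ^ 2 := by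
      have hD : 0 ≤ Metric.infDist y K := Metric.infDist_nonneg
      have ht : 0 ≤ dist x y := dist_nonneg
      have htri : d ≤ Metric.infDist y K + dist x y := Metric.infDist_le_infDist_add_dist
      rw [div_le_iff₀ hlam1]
      nlinarith [sq_nonneg (Metric.infDist y K - lam * dist x y),
        mul_le_mul_of_nonneg_left (pow_le_pow_left₀ hd.le htri 2) hlam.le]
    have hdist : dist x y ^ 2 = ‖x‖ ^ 2 - 2 * ⟪x, y⟫ + ‖y‖ ^ 2 := by
      rw [dist_eq_norm, norm_sub_sq_real]
    nlinarith [hkey]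
  · rw [affAux_apply, real_inner_self_eq_norm_sq]
    ring

open Metric InnerProductGeometry RealInnerProductSpace in
/-- Upper bound on the convex envelope in terms of a pair of nearest points. -/
lemma convEnv_le_of_pair {n : ℕ} (K : Set (EuclideanSpace ℝ (Fin n))) (lam : ℝ)
    (hlam : 0 < lam) (x y₁ y₂ : EuclideanSpace ℝ (Fin n)) (hy₁ : y₁ ∈ K) (hy₂ : y₂ ∈ K)
    (hdy₁ : dist x y₁ = Metric.infDist x K) (hdy₂ : dist x y₂ = Metric.infDist x K)
    (hd : 0 < Metric.infDist x K) :
    convEnv (fun y => Metric.infDist y K ^ 2 + lam * ‖y‖ ^ 2) x ≤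
      Metric.infDist x K ^ 2 + lam * ‖x‖ ^ 2 -
        Real.sin (InnerProductGeometry.angle (y₁ - x) (y₂ - x) / 2) ^ 2 *
          Metric.infDist x K ^ 2 / (1 + lam) := by
  have hlam1 : (0:ℝ) < 1 + lam := by linarith
  set d : ℝ := Metric.infDist x K with hd_def
  set θ : ℝ := InnerProductGeometry.angle (y₁ - x) (y₂ - x) with hθ_def
  have hn1 : ‖y₁ - x‖ = d := by rw [← hdy₁, dist_eq_norm, norm_sub_rev]
  have hn2 : ‖y₂ - x‖ = d := by rw [← hdy₂, dist_eq_norm, norm_sub_rev]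
  have hcos : ⟪y₁ - x, y₂ - x⟫ = d ^ 2 * Real.cos θ := by
    have h := InnerProductGeometry.cos_angle (y₁ - x) (y₂ - x)
    rw [hn1, hn2, ← hθ_def, eq_div_iff (by positivity : (d : ℝ) * d ≠ 0)] at h
    rw [← h]
    ring
  have hcos' : ⟪y₂ - x, y₁ - x⟫ = d ^ 2 * Real.cos θ :=
    (real_inner_comm _ _).trans hcos
  have hsin : Real.sin (θ / 2) ^ 2 = (1 - Real.cos θ) / 2 := sin_sq_half_of_cos
  apply csSup_le (convEnv_set_props K lam hlam x).1
  rintro a ⟨ℓ, hle, rfl⟩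
  set s : ℝ := 1 / (2 * (1 + lam)) with hs_def
  have hs : 0 < s := by positivity
  set w : EuclideanSpace ℝ (Fin n) := s • (y₁ - y₂) with hw_def
  have hdec : ∀ y, ℓ y = ℓ.linear y + ℓ 0 := by
    intro y
    conv_lhs => rw [ℓ.decomp]
    simp
  have haff : ℓ (x + w) + ℓ (x - w) = 2 * ℓ x := by
    rw [hdec (x + w), hdec (x - w), hdec x, map_add, map_sub]
    ring
  have hb1 : ℓ (x + w) ≤ ‖x + w - y₁‖ ^ 2 + lam * ‖x + w‖ ^ 2 := by
    refine le_trans (hle (x + w)) ?_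
    have h1 : Metric.infDist (x + w) K ≤ dist (x + w) y₁ := Metric.infDist_le_dist_of_mem hy₁
    have h2 : Metric.infDist (x + w) K ^ 2 ≤ ‖x + w - y₁‖ ^ 2 := by
      rw [← dist_eq_norm]
      exact pow_le_pow_left₀ Metric.infDist_nonneg h1 2
    linarith
  have hb2 : ℓ (x - w) ≤ ‖x - w - y₂‖ ^ 2 + lam * ‖x - w‖ ^ 2 := by
    refine le_trans (hle (x - w)) ?_
    have h1 : Metric.infDist (x - w) K ≤ dist (x - w) y₂ := Metric.infDist_le_dist_of_mem hy₂
    have h2 : Metric.infDist (x - w) K ^ 2 ≤ ‖x - w - y₂‖ ^ 2 := by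
      rw [← dist_eq_norm]
      exact pow_le_pow_left₀ Metric.infDist_nonneg h1 2
    linarith
  have e1 : ‖x + w - y₁‖ ^ 2
      = s ^ 2 * ‖y₁ - y₂‖ ^ 2 - 2 * (s * ⟪y₁ - y₂, y₁ - x⟫) + d ^ 2 := by
    have hv : x + w - y₁ = w - (y₁ - x) := by abel
    rw [hv, norm_sub_sq_real, hn1, hw_def, real_inner_smul_left, norm_smul,
      Real.norm_eq_abs, abs_of_pos hs]
    ring
  have e2 : ‖x - w - y₂‖ ^ 2
      = s ^ 2 * ‖y₁ - y₂‖ ^ 2 + 2 * (s * ⟪y₁ - y₂, y₂ - x⟫) + d ^ 2 := by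
    have hv : x - w - y₂ = -(w + (y₂ - x)) := by rw [hw_def]; abel
    rw [hv, norm_neg, norm_add_sq_real, hn2, hw_def, real_inner_smul_left, norm_smul,
      Real.norm_eq_abs, abs_of_pos hs]
    ring
  have e3 : ‖x + w‖ ^ 2 = ‖x‖ ^ 2 + 2 * ⟪x, w⟫ + ‖w‖ ^ 2 := norm_add_sq_real x w
  have e4 : ‖x - w‖ ^ 2 = ‖x‖ ^ 2 - 2 * ⟪x, w⟫ + ‖w‖ ^ 2 := norm_sub_sq_real x w
  have e5 : ‖w‖ ^ 2 = s ^ 2 * ‖y₁ - y₂‖ ^ 2 := by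
    rw [hw_def, norm_smul, Real.norm_eq_abs, abs_of_pos hs]; ring
  have e6 : ‖y₁ - y₂‖ ^ 2 = 2 * d ^ 2 - 2 * (d ^ 2 * Real.cos θ) := by
    have hv : y₁ - y₂ = (y₁ - x) - (y₂ - x) := by abel
    rw [hv, norm_sub_sq_real, hn1, hn2, hcos]
    ring
  have e7 : ⟪y₁ - y₂, y₁ - x⟫ = d ^ 2 - d ^ 2 * Real.cos θ := by
    have hv : y₁ - y₂ = (y₁ - x) - (y₂ - x) := by abel
    rw [hv, inner_sub_left, real_inner_self_eq_norm_sq, hn1, hcos']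
  have e8 : ⟪y₁ - y₂, y₂ - x⟫ = d ^ 2 * Real.cos θ - d ^ 2 := by
    have hv : y₁ - y₂ = (y₁ - x) - (y₂ - x) := by abel
    rw [hv, inner_sub_left, real_inner_self_eq_norm_sq, hn2, hcos]
  have hsum : ‖x + w - y₁‖ ^ 2 + lam * ‖x + w‖ ^ 2 + (‖x - w - y₂‖ ^ 2 + lam * ‖x - w‖ ^ 2)
      = 2 * (d ^ 2 + lam * ‖x‖ ^ 2 - Real.sin (θ / 2) ^ 2 * d ^ 2 / (1 + lam)) := by
    rw [e1, e2, e3, e4, e5, e6, e7, e8, hsin, hs_def]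
    field_simp
    ring
  have hfin : 2 * ℓ x
      ≤ 2 * (d ^ 2 + lam * ‖x‖ ^ 2 - Real.sin (θ / 2) ^ 2 * d ^ 2 / (1 + lam)) := by
    rw [← hsum, ← haff]
    linarith
  linarith

lemma sin_half_sq_le_add {a b : ℝ} (hab : b ≤ a) :
    Real.sin (a / 2) ^ 2 ≤ Real.sin (b / 2) ^ 2 + (a - b) := by
  have h1 := abs_sin_sub_sin_le (a / 2) (b / 2)
  have h2 : |a / 2 - b / 2| = (a - b) / 2 := by
    rw [abs_of_nonneg (by linarith)]
    ring
  rw [h2] at h1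
  have habs : |Real.sin (a / 2) + Real.sin (b / 2)| ≤ 2 := by
    calc |Real.sin (a / 2) + Real.sin (b / 2)|
        ≤ |Real.sin (a / 2)| + |Real.sin (b / 2)| := abs_add_le _ _
      _ ≤ 1 + 1 := add_le_add (Real.abs_sin_le_one _) (Real.abs_sin_le_one _)
      _ = 2 := by norm_num
  have hkey2 : Real.sin (a / 2) ^ 2 - Real.sin (b / 2) ^ 2 ≤ a - b := by
    calc Real.sin (a / 2) ^ 2 - Real.sin (b / 2) ^ 2
        = (Real.sin (a / 2) - Real.sin (b / 2)) * (Real.sin (a / 2) + Real.sin (b / 2)) := by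
          ring
      _ ≤ |(Real.sin (a / 2) - Real.sin (b / 2)) * (Real.sin (a / 2) + Real.sin (b / 2))| :=
          le_abs_self _
      _ = |Real.sin (a / 2) - Real.sin (b / 2)| * |Real.sin (a / 2) + Real.sin (b / 2)| :=
          abs_mul _ _
      _ ≤ ((a - b) / 2) * 2 := mul_le_mul h1 habs (abs_nonneg _) (by linarith)
      _ = a - b := by ring
  linarith

open Metric InnerProductGeometry RealInnerProductSpace in
/-- Bounds for the multiscale medial axis map on the medial axis in terms of
the separation angle. -/
theorem mmam_bounds_on_medial_axis (n : ℕ) (hn : 1 ≤ n)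
    (K : Set (EuclideanSpace ℝ (Fin n))) (hK : K.Nonempty) (hKc : IsClosed K)
    (hKne : K ≠ Set.univ) (lam : ℝ) (hlam : 0 < lam)
    (x : EuclideanSpace ℝ (Fin n)) (hx : x ∉ K)
    (hmed : ∃ y₁ ∈ K, ∃ y₂ ∈ K, y₁ ≠ y₂ ∧
      Metric.infDist x K = dist x y₁ ∧ Metric.infDist x K = dist x y₂) :
    Real.sin (sepAngle K x / 2) ^ 2 * Metric.infDist x K ^ 2 ≤ mmam lam K x ∧
    mmam lam K x ≤ Metric.infDist x K ^ 2 := by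
  classical
  have hd : 0 < Metric.infDist x K := (hKc.notMem_iff_infDist_pos hK).mp hx
  set d : ℝ := Metric.infDist x K with hd_def
  have hlam1 : (0:ℝ) < 1 + lam := by linarith
  set C : ℝ := convEnv (fun y => Metric.infDist y K ^ 2 + lam * ‖y‖ ^ 2) x with hC_def
  have hmm : mmam lam K x = (1 + lam) * (d ^ 2 - (C - lam * ‖x‖ ^ 2)) := by
    simp only [mmam, lowerT, hC_def, hd_def]
  -- upper bound
  have hupper : mmam lam K x ≤ d ^ 2 := by
    have hle : lam * ‖x‖ ^ 2 + lam * d ^ 2 / (1 + lam) ≤ C :=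
      convEnv_ge_of_infDist K lam hlam x hd
    have hdiv : lam * d ^ 2 / (1 + lam) * (1 + lam) = lam * d ^ 2 :=
      div_mul_cancel₀ _ hlam1.ne'
    have hle2 := mul_le_mul_of_nonneg_right hle hlam1.le
    rw [add_mul, hdiv] at hle2
    rw [hmm]
    nlinarith [hle2]
  refine ⟨?_, hupper⟩
  -- lower bound
  have key : ∀ y₁ ∈ K, ∀ y₂ ∈ K, dist x y₁ = d → dist x y₂ = d →
      Real.sin (InnerProductGeometry.angle (y₁ - x) (y₂ - x) / 2) ^ 2 * d ^ 2
        ≤ mmam lam K x := by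
    intro y₁ hy₁ y₂ hy₂ hdy₁ hdy₂
    set θ : ℝ := InnerProductGeometry.angle (y₁ - x) (y₂ - x) with hθ_def
    have hsup : C ≤ d ^ 2 + lam * ‖x‖ ^ 2 - Real.sin (θ / 2) ^ 2 * d ^ 2 / (1 + lam) :=
      convEnv_le_of_pair K lam hlam x y₁ y₂ hy₁ hy₂ hdy₁ hdy₂ hd
    rw [hmm]
    have hge : Real.sin (θ / 2) ^ 2 * d ^ 2 / (1 + lam)
        ≤ d ^ 2 - (C - lam * ‖x‖ ^ 2) := by linarith
    calc Real.sin (θ / 2) ^ 2 * d ^ 2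
        = (1 + lam) * (Real.sin (θ / 2) ^ 2 * d ^ 2 / (1 + lam)) := by
          field_simp
      _ ≤ (1 + lam) * (d ^ 2 - (C - lam * ‖x‖ ^ 2)) :=
          mul_le_mul_of_nonneg_left hge hlam1.le
  -- pass to the supremum of angles
  set T : Set ℝ := {θ : ℝ | ∃ y₁ ∈ K, ∃ y₂ ∈ K,
    dist x y₁ = Metric.infDist x K ∧ dist x y₂ = Metric.infDist x K ∧
    θ = InnerProductGeometry.angle (y₁ - x) (y₂ - x)} with hT_def
  have hsep : sepAngle K x = sSup T := rfl
  have hTne : T.Nonempty := by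
    obtain ⟨y₁, hy₁, y₂, hy₂, _, h1, h2⟩ := hmed
    exact ⟨InnerProductGeometry.angle (y₁ - x) (y₂ - x), y₁, hy₁, y₂, hy₂, h1.symm, h2.symm, rfl⟩
  have hTbdd : BddAbove T := by
    refine ⟨Real.pi, ?_⟩
    rintro θ ⟨y₁, _, y₂, _, _, _, rfl⟩
    exact InnerProductGeometry.angle_le_pi _ _
  have hkeyT : ∀ θ ∈ T, Real.sin (θ / 2) ^ 2 * d ^ 2 ≤ mmam lam K x := by
    rintro θ ⟨y₁, hy₁, y₂, hy₂, h1, h2, rfl⟩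
    exact key y₁ hy₁ y₂ hy₂ h1 h2
  rw [hsep]
  set θs : ℝ := sSup T with hθs_def
  refine le_of_forall_pos_le_add ?_
  intro ε hε
  have hδ : 0 < ε / d ^ 2 := by positivity
  obtain ⟨θ, hθT, hθgt⟩ := exists_lt_of_lt_csSup hTne
    (show θs - ε / d ^ 2 < θs by linarith)
  have hθle : θ ≤ θs := le_csSup hTbdd hθT
  have hlip : Real.sin (θs / 2) ^ 2 ≤ Real.sin (θ / 2) ^ 2 + (θs - θ) :=
    sin_half_sq_le_add hθle
  calc Real.sin (θs / 2) ^ 2 * d ^ 2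
      ≤ (Real.sin (θ / 2) ^ 2 + (θs - θ)) * d ^ 2 :=
        mul_le_mul_of_nonneg_right hlip (by positivity)
    _ = Real.sin (θ / 2) ^ 2 * d ^ 2 + (θs - θ) * d ^ 2 := by ring
    _ ≤ mmam lam K x + ε := by
        have h1 := hkeyT θ hθT
        have h2 : (θs - θ) * d ^ 2 ≤ ε := by
          have h3 : θs - θ < ε / d ^ 2 := by linarith
          exact ((lt_div_iff₀ (by positivity)).mp h3).le
        linarith
end

section
/- Let n ≥ 1 and let f : ℝⁿ → ℝ be bounded with |f(x)| ≤ M for some M > 0 and all x ∈ ℝⁿ. Then for all λ > 0, τ > 0 and all x ∈ ℝⁿ: 0 ≤ C^u_τ(C^l_λ(f))(x) − C^l_λ(f)(x) ≤ 16Mλ/τ and 0 ≤ C^u_λ(f)(x) − C^l_τ(C^u_λ(f))(x) ≤ 16Mλ/τ. In particular, for fixed λ the mixed transform C^u_τ(C^l_λ(f)) converges to C^l_λ(f) uniformly on ℝⁿ as τ → ∞. -/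
open RealInnerProductSpace



namespace MixedAux

abbrev E (n : ℕ) := EuclideanSpace ℝ (Fin n)

variable {n : ℕ}

noncomputable def tang (t : ℝ) (x0 : E n) (c : ℝ) : E n →ᵃ[ℝ] ℝ :=
  LinearMap.toAffineMap ((t • (innerSL ℝ x0)).toLinearMap) + AffineMap.const ℝ (E n) c

lemma tang_apply (t : ℝ) (x0 : E n) (c : ℝ) (y : E n) :
    tang t x0 c y = t * ⟪x0, y⟫ + c := by
  simp [tang]

def envSet (g : E n → ℝ) (x : E n) : Set ℝ :=
  {a : ℝ | ∃ ℓ : E n →ᵃ[ℝ] ℝ, (∀ y, ℓ y ≤ g y) ∧ a = ℓ x}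

lemma convEnv_eq (g : E n → ℝ) (x : E n) : convEnv g x = sSup (envSet g x) := rfl

lemma bddAbove_envSet (g : E n → ℝ) (x : E n) : BddAbove (envSet g x) := by
  refine ⟨g x, ?_⟩
  rintro a ⟨ℓ, hℓ, rfl⟩
  exact hℓ x

lemma le_convEnv (g : E n → ℝ) (x : E n) (ℓ : E n →ᵃ[ℝ] ℝ) (hℓ : ∀ y, ℓ y ≤ g y) :
    ℓ x ≤ convEnv g x :=
  le_csSup (bddAbove_envSet g x) ⟨ℓ, hℓ, rfl⟩

lemma convEnv_le (g : E n → ℝ) (x : E n) (h : (envSet g x).Nonempty)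
    (C : ℝ) (hC : ∀ ℓ : E n →ᵃ[ℝ] ℝ, (∀ y, ℓ y ≤ g y) → ℓ x ≤ C) :
    convEnv g x ≤ C := by
  rw [convEnv_eq]
  apply csSup_le h
  rintro a ⟨ℓ, hℓ, rfl⟩
  exact hC ℓ hℓ

/-- Semiconvexity-type estimate for the lower transform. -/
lemma lowerT_semiconvex (f : E n → ℝ) (M lam : ℝ) (hM : 0 < M) (hf : ∀ x, |f x| ≤ M)
    (hlam : 0 < lam) (s : ℝ) (hs : 1 ≤ s) (x y : E n) :
    lowerT lam f y ≤ lowerT lam f x + 2*M/s + lam*(s-1)*‖y-x‖^2 := by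
  have hs0 : (0:ℝ) < s := lt_of_lt_of_le one_pos hs
  set F : E n → ℝ := fun y => f y + lam * ‖y‖ ^ 2 with hF
  set C : ℝ := convEnv F x with hCdef
  -- the constant -M minorant for nonemptiness
  have hconst : ∀ z, (AffineMap.const ℝ (E n) (-M)) z ≤ F z := by
    intro z
    have := abs_le.1 (hf z)
    have : -M ≤ f z := this.1
    have h2 : 0 ≤ lam * ‖z‖^2 := by positivity
    simp only [AffineMap.const_apply, hF]
    linarith
  have hne : ∀ w : E n, (envSet F w).Nonempty :=
    fun w => ⟨(AffineMap.const ℝ (E n) (-M)) w, AffineMap.const ℝ (E n) (-M), hconst, rfl⟩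
  -- lower bound for C : lam‖x‖² - M ≤ C via tangent parabola
  have hC2 : lam * ‖x‖^2 - M ≤ C := by
    have hmin : ∀ z, (tang (2*lam) x (-(lam*‖x‖^2) - M)) z ≤ F z := by
      intro z
      rw [tang_apply]
      have hzx : (0:ℝ) ≤ lam * ‖z - x‖^2 := by positivity
      rw [norm_sub_sq_real] at hzx
      have := abs_le.1 (hf z)
      have hfz : -M ≤ f z := this.1
      have hcm : ⟪x, z⟫ = ⟪z, x⟫ := real_inner_comm z x
      simp only [hF]
      nlinarith
    have h := le_convEnv F x _ hmin
    rw [tang_apply, real_inner_self_eq_norm_sq] at h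
    rw [hCdef]
    linarith
  -- main inequality
  have key : convEnv F y ≤ C + lam*‖y‖^2 - lam*‖x‖^2 + 2*M/s + lam*(s-1)*‖y-x‖^2 := by
    apply convEnv_le F y (hne y)
    intro ℓ hℓ
    have hC1 : ℓ x ≤ C := le_convEnv F x ℓ hℓ
    set u := y - x with hu
    have hyu : y = u + x := by simp [hu]
    set z : E n := s • u + x with hz
    have hℓz : ℓ z ≤ M + lam * ‖z‖^2 := by
      have h1 := hℓ z
      have h2 := (abs_le.1 (hf z)).2
      simp only [hF] at h1
      linarith
    -- affine identity : ℓ z = s * (ℓ y - ℓ x) + ℓ x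
    have haff : ℓ z = s * (ℓ y - ℓ x) + ℓ x := by
      have : z = AffineMap.lineMap x y s := by
        simp [AffineMap.lineMap_apply_module, hz, hu]; module
      rw [this, AffineMap.apply_lineMap]
      simp [AffineMap.lineMap_apply_module]; ring
    have hznorm : ‖z‖^2 = s^2*‖u‖^2 + 2*s*⟪u,x⟫ + ‖x‖^2 := by
      rw [hz, norm_add_sq_real, real_inner_smul_left, norm_smul]
      simp [mul_pow, sq_abs]; ring
    have hynorm : ‖y‖^2 = ‖u‖^2 + 2*⟪u,x⟫ + ‖x‖^2 := by
      rw [hyu, norm_add_sq_real]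
    have huxnorm : ‖y - x‖^2 = ‖u‖^2 := by rw [hu]
    set m : ℝ := max (ℓ x) (lam*‖x‖^2 - M) with hm
    have hmC : m ≤ C := max_le hC1 hC2
    have hℓm : ℓ x ≤ m := le_max_left _ _
    have hMm : lam*‖x‖^2 - M ≤ m := le_max_right _ _
    -- multiplied-out inequality
    have hmul : s * (ℓ y) ≤ s * (C + lam*‖y‖^2 - lam*‖x‖^2 + lam*(s-1)*‖y - x‖^2) + 2*M := by
      have p1 : (s - 1) * (ℓ x) ≤ (s - 1) * m :=
        mul_le_mul_of_nonneg_left hℓm (by linarith)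
      have p2 : s * m ≤ s * C := mul_le_mul_of_nonneg_left hmC (le_of_lt hs0)
      rw [hynorm, huxnorm]
      nlinarith [hℓz, haff, hznorm]
    have hdiv : (ℓ y - (C + lam*‖y‖^2 - lam*‖x‖^2 + lam*(s-1)*‖y - x‖^2)) ≤ 2*M/s := by
      rw [le_div_iff₀ hs0]
      nlinarith [hmul]
    linarith
  simp only [lowerT, ← hF, ← hCdef]
  linarith [key]


/-- Main estimate for the upper transform of a semiconvex bounded-above function. -/
lemma upperT_est (g : E n → ℝ) (M lam : ℝ) (hM : 0 < M) (hlam : 0 < lam)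
    (hgle : ∀ y, g y ≤ M)
    (hg : ∀ s, 1 ≤ s → ∀ x y, g y ≤ g x + 2*M/s + lam*(s-1)*‖y-x‖^2)
    (tau : ℝ) (htau : 0 < tau) (x : E n) :
    0 ≤ upperT tau g x - g x ∧ upperT tau g x - g x ≤ 16*M*lam/tau := by
  set s : ℝ := max 1 (tau/lam) with hsdef
  have hs : 1 ≤ s := le_max_left _ _
  have hs0 : (0:ℝ) < s := lt_of_lt_of_le one_pos hs
  have hcoef : lam * (s - 1) ≤ tau := by
    rcases le_total (tau/lam) 1 with h | h
    · rw [hsdef, max_eq_left h]; simpa using le_of_lt htau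
    · rw [hsdef, max_eq_right h]
      have : lam * (tau/lam) = tau := mul_div_cancel₀ tau (ne_of_gt hlam)
      nlinarith
  have hEs : 2*M/s ≤ 16*M*lam/tau := by
    rcases le_total (tau/lam) 1 with h | h
    · rw [hsdef, max_eq_left h]
      have htl : tau ≤ lam := by
        rw [div_le_one hlam] at h; exact h
      rw [div_le_div_iff₀ one_pos htau]
      nlinarith
    · rw [hsdef, max_eq_right h]
      have h1 : tau/lam > 0 := by positivity
      rw [div_le_div_iff₀ h1 htau]
      nlinarith [mul_div_cancel₀ tau (ne_of_gt hlam)]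
  set h : E n → ℝ := fun y => tau * ‖y‖ ^ 2 - g y with hh
  -- the tangent-parabola minorant
  set ℓ : E n →ᵃ[ℝ] ℝ := tang (2*tau) x (-(tau*‖x‖^2) - g x - 2*M/s) with hℓdef
  have hmin : ∀ y, ℓ y ≤ h y := by
    intro y
    rw [hℓdef, tang_apply]
    have h1 := hg s hs x y
    have h2 : lam*(s-1)*‖y-x‖^2 ≤ tau*‖y-x‖^2 := by
      have : (0:ℝ) ≤ ‖y-x‖^2 := by positivity
      nlinarith
    have h3 : ‖y - x‖^2 = ‖y‖^2 - 2*⟪x,y⟫ + ‖x‖^2 := by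
      rw [norm_sub_sq_real, real_inner_comm y x]
    simp only [hh]
    nlinarith
  have hupper : tau*‖x‖^2 - g x - 2*M/s ≤ convEnv h x := by
    have := le_convEnv h x ℓ hmin
    rw [hℓdef, tang_apply, real_inner_self_eq_norm_sq] at this
    linarith
  have hlower : convEnv h x ≤ tau*‖x‖^2 - g x := by
    apply convEnv_le h x ⟨ℓ x, ℓ, hmin, rfl⟩
    intro ℓ' hℓ'
    exact hℓ' x
  constructor
  · simp only [upperT, ← hh]; linarith
  · simp only [upperT, ← hh]; linarith

/-- Duality : lowerT of a negation. -/
lemma lowerT_neg (h : E n → ℝ) (t : ℝ) (x : E n) :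
    lowerT t (fun y => - h y) x = - upperT t h x := by
  simp only [lowerT, upperT]
  rw [show (fun y => -h y + t * ‖y‖^2) = (fun y : E n => t * ‖y‖^2 - h y) from
    funext fun y => by ring]
  ring

lemma upperT_eq (f : E n → ℝ) (t : ℝ) (x : E n) :
    upperT t f x = - lowerT t (fun y => - f y) x := by
  simp only [lowerT, upperT]
  rw [show (fun y => -f y + t * ‖y‖^2) = (fun y : E n => t * ‖y‖^2 - f y) from
    funext fun y => by ring]
  ring

/-- The lower transform lies below the function (for bounded f). -/
lemma lowerT_le_self (f : E n → ℝ) (M lam : ℝ) (hf : ∀ x, |f x| ≤ M) (hlam : 0 < lam)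
    (y : E n) : lowerT lam f y ≤ f y := by
  have hconst : ∀ z, (AffineMap.const ℝ (E n) (-M)) z ≤ f z + lam * ‖z‖^2 := by
    intro z
    have h1 := (abs_le.1 (hf z)).1
    have h2 : 0 ≤ lam * ‖z‖^2 := by positivity
    simp only [AffineMap.const_apply]
    linarith
  have : convEnv (fun z => f z + lam * ‖z‖^2) y ≤ f y + lam*‖y‖^2 := by
    apply convEnv_le _ y ⟨_, AffineMap.const ℝ (E n) (-M), hconst, rfl⟩
    intro ℓ hℓ
    exact hℓ y
  simp only [lowerT]
  linarith

end MixedAux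

/-- Estimates for the mixed compensated convex transforms of a bounded function,
and uniform convergence of `C^u_τ(C^l_λ(f))` to `C^l_λ(f)` as `τ → ∞`. -/
theorem mixed_transform_estimates (n : ℕ) (hn : 1 ≤ n)
    (f : EuclideanSpace ℝ (Fin n) → ℝ) (M : ℝ) (hM : 0 < M) (hf : ∀ x, |f x| ≤ M)
    (lam : ℝ) (hlam : 0 < lam) :
    (∀ tau : ℝ, 0 < tau → ∀ x,
      (0 ≤ upperT tau (lowerT lam f) x - lowerT lam f x ∧
        upperT tau (lowerT lam f) x - lowerT lam f x ≤ 16 * M * lam / tau) ∧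
      (0 ≤ upperT lam f x - lowerT tau (fun y => upperT lam f y) x ∧
        upperT lam f x - lowerT tau (fun y => upperT lam f y) x ≤ 16 * M * lam / tau)) ∧
    TendstoUniformly (fun (tau : ℝ) (x : EuclideanSpace ℝ (Fin n)) =>
        upperT tau (lowerT lam f) x)
      (fun x => lowerT lam f x) Filter.atTop := by
  have est : ∀ (f₀ : MixedAux.E n → ℝ), (∀ x, |f₀ x| ≤ M) → ∀ tau : ℝ, 0 < tau →
      ∀ x : MixedAux.E n,
      0 ≤ upperT tau (lowerT lam f₀) x - lowerT lam f₀ x ∧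
        upperT tau (lowerT lam f₀) x - lowerT lam f₀ x ≤ 16*M*lam/tau := by
    intro f₀ hf₀ tau htau x
    exact MixedAux.upperT_est (lowerT lam f₀) M lam hM hlam
      (fun y => le_trans (MixedAux.lowerT_le_self f₀ M lam hf₀ hlam y) ((abs_le.1 (hf₀ y)).2))
      (fun s hs x y => MixedAux.lowerT_semiconvex f₀ M lam hM hf₀ hlam s hs x y) tau htau x
  refine ⟨fun tau htau x => ⟨est f hf tau htau x, ?_⟩, ?_⟩
  · have hf' : ∀ z, |(-f z)| ≤ M := fun z => by rw [abs_neg]; exact hf z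
    set G := lowerT lam (fun y => -f y) with hG
    have h1 : ∀ y, upperT lam f y = - G y := fun y => MixedAux.upperT_eq f lam y
    have h2 : lowerT tau (fun y => upperT lam f y) x = - upperT tau G x := by
      rw [show (fun y => upperT lam f y) = (fun y => - G y) from funext h1]
      exact MixedAux.lowerT_neg G tau x
    have h3 := est (fun y => -f y) hf' tau htau x
    rw [h1 x, h2]
    exact ⟨by linarith [h3.1], by linarith [h3.2]⟩
  · rw [Metric.tendstoUniformly_iff]
    intro ε hε
    filter_upwards [Filter.eventually_ge_atTop (max 1 (32*M*lam/ε))] with tau htau x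
    have ht1 : (1:ℝ) ≤ tau := le_trans (le_max_left _ _) htau
    have ht0 : (0:ℝ) < tau := lt_of_lt_of_le one_pos ht1
    have ht2 : 32*M*lam/ε ≤ tau := le_trans (le_max_right _ _) htau
    have h := est f hf tau ht0 x
    rw [Real.dist_eq, abs_of_nonpos (by linarith [h.1])]
    have hmul : 32*M*lam ≤ tau * ε := by
      rw [div_le_iff₀ hε] at ht2; linarith
    have hhalf : 16*M*lam/tau ≤ ε/2 := by
      rw [div_le_iff₀ ht0]; nlinarith
    linarith [h.2]
end
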